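/- arXiv:2301.04876 — 8 statements merged into one kernel-verified Lean document; each statement's English description precedes it below -/
import Mathlib

section
/- Under random assignment and one-sided noncompliance for both treatments, the Wald estimand δ_{A0} = (E[Y|Z_A=1,Z_B=0] − E[Y|Z_A=0,Z_B=0]) / (E[D_A|Z_A=1,Z_B=0] − E[D_A|Z_A=0,Z_B=0]) equals E[Y(1,0) − Y(0,0) | D_A(1,0)=1], the average effect of treatment A alone among units with D_A(1,0)=1 (self-compliers and cross-defiers). -/
open MeasureTheory ProbabilityTheory

/-- Conditional expectation of `X` given the event `E`: `E[X · 1_E] / P(E)`. -/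
noncomputable def cexp {Ω : Type*} [MeasurableSpace Ω] (μ : Measure Ω) (X : Ω → ℝ) (E : Set Ω) : ℝ :=
  (∫ ω in E, X ω ∂μ) / (μ E).toReal

lemma key_indep_setIntegral {Ω : Type*} [MeasurableSpace Ω] (μ : Measure Ω)
    [IsProbabilityMeasure μ] {V : Ω → ℝ × ℝ} {F : Ω → ℝ} (hV : Measurable V)
    (hF : Integrable F μ) (hInd : IndepFun V F μ) {s : Set (ℝ × ℝ)} (hs : MeasurableSet s) :
    ∫ ω in V ⁻¹' s, F ω ∂μ = (μ (V ⁻¹' s)).toReal * ∫ ω, F ω ∂μ := by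
  have hVs : MeasurableSet (V ⁻¹' s) := hV hs
  set X : Ω → ℝ := (V ⁻¹' s).indicator (fun _ => (1 : ℝ)) with hXdef
  have hXV : X = (s.indicator (fun _ => (1 : ℝ))) ∘ V := by
    ext ω
    by_cases h : V ω ∈ s <;> simp [hXdef, Set.indicator, Set.mem_preimage, h]
  have hX : IndepFun X F μ := by
    rw [hXV]
    exact hInd.comp (measurable_const.indicator hs) measurable_id
  have hXint : Integrable X μ := (integrable_const (1 : ℝ)).indicator hVs
  have hmul := hX.integral_mul_eq_mul_integral hXint.aestronglyMeasurable hF.aestronglyMeasurable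
  have h1 : ∫ ω in V ⁻¹' s, F ω ∂μ = ∫ ω, (X * F) ω ∂μ := by
    rw [← integral_indicator hVs]
    congr 1
    ext ω
    by_cases h : ω ∈ V ⁻¹' s <;> simp [hXdef, h]
  have h2 : ∫ ω, X ω ∂μ = (μ (V ⁻¹' s)).toReal := by
    rw [hXdef, integral_indicator hVs]
    simp [Measure.restrict_apply_univ, Measure.real]
  rw [h1, hmul, h2]

theorem stmt_5 {Ω : Type*} [MeasurableSpace Ω] (μ : Measure Ω) [IsProbabilityMeasure μ]
    (ZA ZB : Ω → ℝ) (DA DB : ℝ → ℝ → Ω → ℝ) (Y : ℝ → ℝ → Ω → ℝ)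
    (DAobs DBobs Yobs : Ω → ℝ)
    (hZAm : Measurable ZA) (hZBm : Measurable ZB)
    (hZAbin : ∀ ω, ZA ω = 0 ∨ ZA ω = 1) (hZBbin : ∀ ω, ZB ω = 0 ∨ ZB ω = 1)
    (hDAm : ∀ z1 z2 : ℝ, (z1 = 0 ∨ z1 = 1) → (z2 = 0 ∨ z2 = 1) → Measurable (DA z1 z2))
    (hDBm : ∀ z1 z2 : ℝ, (z1 = 0 ∨ z1 = 1) → (z2 = 0 ∨ z2 = 1) → Measurable (DB z1 z2))
    (hDAbin : ∀ z1 z2 : ℝ, (z1 = 0 ∨ z1 = 1) → (z2 = 0 ∨ z2 = 1) →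
      ∀ ω, DA z1 z2 ω = 0 ∨ DA z1 z2 ω = 1)
    (hDBbin : ∀ z1 z2 : ℝ, (z1 = 0 ∨ z1 = 1) → (z2 = 0 ∨ z2 = 1) →
      ∀ ω, DB z1 z2 ω = 0 ∨ DB z1 z2 ω = 1)
    (hYm : ∀ d1 d2 : ℝ, (d1 = 0 ∨ d1 = 1) → (d2 = 0 ∨ d2 = 1) → Measurable (Y d1 d2))
    (hYint : ∀ d1 d2 : ℝ, (d1 = 0 ∨ d1 = 1) → (d2 = 0 ∨ d2 = 1) → Integrable (Y d1 d2) μ)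
    (hDAobs : ∀ ω, DAobs ω = DA (ZA ω) (ZB ω) ω)
    (hDBobs : ∀ ω, DBobs ω = DB (ZA ω) (ZB ω) ω)
    (hYobs : ∀ ω, Yobs ω = Y (DAobs ω) (DBobs ω) ω)
    (hindep : IndepFun (fun ω => (ZA ω, ZB ω))
      (fun ω => (Y 0 0 ω, Y 0 1 ω, Y 1 0 ω, Y 1 1 ω,
        DA 0 0 ω, DA 0 1 ω, DA 1 0 ω, DA 1 1 ω,
        DB 0 0 ω, DB 0 1 ω, DB 1 0 ω, DB 1 1 ω)) μ)
    (honcA : ∀ z : ℝ, (z = 0 ∨ z = 1) → ∀ ω, DA 0 z ω = 0)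
    (honcB : ∀ z : ℝ, (z = 0 ∨ z = 1) → ∀ ω, DB z 0 ω = 0)
    (hz10 : 0 < μ {ω | ZA ω = 1 ∧ ZB ω = 0})
    (hz00 : 0 < μ {ω | ZA ω = 0 ∧ ZB ω = 0})
    (hfs : 0 < μ {ω | DA 1 0 ω = 1}) :
    (cexp μ Yobs {ω | ZA ω = 1 ∧ ZB ω = 0} - cexp μ Yobs {ω | ZA ω = 0 ∧ ZB ω = 0}) /
        (cexp μ DAobs {ω | ZA ω = 1 ∧ ZB ω = 0} - cexp μ DAobs {ω | ZA ω = 0 ∧ ZB ω = 0}) =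
      cexp μ (fun ω => Y 1 0 ω - Y 0 0 ω) {ω | DA 1 0 ω = 1} := by
  classical
  set V : Ω → ℝ × ℝ := fun ω => (ZA ω, ZB ω) with hVdef
  have hVm : Measurable V := hZAm.prodMk hZBm
  -- measurability of the needed potential variables
  have hY00m := hYm 0 0 (Or.inl rfl) (Or.inl rfl)
  have hY10m := hYm 1 0 (Or.inr rfl) (Or.inl rfl)
  have hDA10m := hDAm 1 0 (Or.inr rfl) (Or.inl rfl)
  have hY00int := hYint 0 0 (Or.inl rfl) (Or.inl rfl)
  have hY10int := hYint 1 0 (Or.inr rfl) (Or.inl rfl)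
  -- the complier set
  set S : Set Ω := {ω | DA 1 0 ω = 1} with hSdef
  have hSmeas : MeasurableSet S := hDA10m (measurableSet_singleton 1)
  -- G = DA 1 0 * (Y 1 0 - Y 0 0)
  set G : Ω → ℝ := fun ω => DA 1 0 ω * (Y 1 0 ω - Y 0 0 ω) with hGdef
  have hGind : G = S.indicator (fun ω => Y 1 0 ω - Y 0 0 ω) := by
    ext ω
    rcases hDAbin 1 0 (Or.inr rfl) (Or.inl rfl) ω with h | h <;>
      simp [hGdef, hSdef, Set.indicator, h]
  have hGint : Integrable G μ := by
    rw [hGind]; exact (hY10int.sub hY00int).indicator hSmeas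
  -- F = Y 0 0 + G
  set F : Ω → ℝ := fun ω => Y 0 0 ω + G ω with hFdef
  have hFint : Integrable F μ := hY00int.add hGint
  -- independence of V with the composite functions
  have hIndF : IndepFun V F μ :=
    hindep.comp measurable_id
      (show Measurable fun p : ℝ × ℝ × ℝ × ℝ × ℝ × ℝ × ℝ × ℝ × ℝ × ℝ × ℝ × ℝ =>
        p.1 + p.2.2.2.2.2.2.1 * (p.2.2.1 - p.1) by fun_prop)
  have hIndY00 : IndepFun V (Y 0 0) μ :=
    hindep.comp measurable_id
      (show Measurable fun p : ℝ × ℝ × ℝ × ℝ × ℝ × ℝ × ℝ × ℝ × ℝ × ℝ × ℝ × ℝ => p.1 by fun_prop)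
  have hIndDA : IndepFun V (DA 1 0) μ :=
    hindep.comp measurable_id
      (show Measurable fun p : ℝ × ℝ × ℝ × ℝ × ℝ × ℝ × ℝ × ℝ × ℝ × ℝ × ℝ × ℝ =>
        p.2.2.2.2.2.2.1 by fun_prop)
  have hDA10int : Integrable (DA 1 0) μ := by
    have : DA 1 0 = S.indicator (fun _ => (1 : ℝ)) := by
      ext ω
      rcases hDAbin 1 0 (Or.inr rfl) (Or.inl rfl) ω with h | h <;>
        simp [hSdef, Set.indicator, h]
    rw [this]; exact (integrable_const 1).indicator hSmeas
  -- events as preimages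
  set s10 : Set (ℝ × ℝ) := {p | p.1 = 1 ∧ p.2 = 0} with hs10def
  set s00 : Set (ℝ × ℝ) := {p | p.1 = 0 ∧ p.2 = 0} with hs00def
  have hs10m : MeasurableSet s10 := by
    have : s10 = Prod.fst ⁻¹' {(1 : ℝ)} ∩ Prod.snd ⁻¹' {(0 : ℝ)} := by
      ext p; simp [hs10def, Set.mem_preimage]
    rw [this]
    exact (measurable_fst (measurableSet_singleton _)).inter
      (measurable_snd (measurableSet_singleton _))
  have hs00m : MeasurableSet s00 := by
    have : s00 = Prod.fst ⁻¹' {(0 : ℝ)} ∩ Prod.snd ⁻¹' {(0 : ℝ)} := by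
      ext p; simp [hs00def, Set.mem_preimage]
    rw [this]
    exact (measurable_fst (measurableSet_singleton _)).inter
      (measurable_snd (measurableSet_singleton _))
  have hE10 : {ω | ZA ω = 1 ∧ ZB ω = 0} = V ⁻¹' s10 := rfl
  have hE00 : {ω | ZA ω = 0 ∧ ZB ω = 0} = V ⁻¹' s00 := rfl
  have hE10m : MeasurableSet (V ⁻¹' s10) := hVm hs10m
  have hE00m : MeasurableSet (V ⁻¹' s00) := hVm hs00m
  -- nonvanishing of measures
  have h10ne : (μ (V ⁻¹' s10)).toReal ≠ 0 := by
    have := hz10; rw [hE10] at this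
    exact (ENNReal.toReal_pos this.ne' (measure_ne_top μ _)).ne'
  have h00ne : (μ (V ⁻¹' s00)).toReal ≠ 0 := by
    have := hz00; rw [hE00] at this
    exact (ENNReal.toReal_pos this.ne' (measure_ne_top μ _)).ne'
  -- pointwise identities on the events
  have hYobs10 : ∀ ω ∈ V ⁻¹' s10, Yobs ω = F ω := by
    intro ω hω
    obtain ⟨hA, hB⟩ : ZA ω = 1 ∧ ZB ω = 0 := hω
    have hDB : DBobs ω = 0 := by
      rw [hDBobs, hA, hB, honcB 1 (Or.inr rfl)]
    have hDA : DAobs ω = DA 1 0 ω := by rw [hDAobs, hA, hB]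
    rw [hYobs, hDB, hDA]
    rcases hDAbin 1 0 (Or.inr rfl) (Or.inl rfl) ω with h | h <;>
      simp [hFdef, hGdef, h] <;> ring
  have hYobs00 : ∀ ω ∈ V ⁻¹' s00, Yobs ω = Y 0 0 ω := by
    intro ω hω
    obtain ⟨hA, hB⟩ : ZA ω = 0 ∧ ZB ω = 0 := hω
    have hDB : DBobs ω = 0 := by rw [hDBobs, hA, hB, honcB 0 (Or.inl rfl)]
    have hDA : DAobs ω = 0 := by rw [hDAobs, hA, hB, honcA 0 (Or.inl rfl)]
    rw [hYobs, hDB, hDA]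
  have hDAobs10 : ∀ ω ∈ V ⁻¹' s10, DAobs ω = DA 1 0 ω := by
    intro ω hω
    obtain ⟨hA, hB⟩ : ZA ω = 1 ∧ ZB ω = 0 := hω
    rw [hDAobs, hA, hB]
  have hDAobs00 : ∀ ω ∈ V ⁻¹' s00, DAobs ω = 0 := by
    intro ω hω
    obtain ⟨hA, hB⟩ : ZA ω = 0 ∧ ZB ω = 0 := hω
    rw [hDAobs, hA, hB, honcA 0 (Or.inl rfl)]
  -- compute the four conditional expectations
  have c1 : cexp μ Yobs {ω | ZA ω = 1 ∧ ZB ω = 0} = ∫ ω, F ω ∂μ := by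
    rw [cexp, hE10, setIntegral_congr_fun hE10m hYobs10,
      key_indep_setIntegral μ hVm hFint hIndF hs10m, mul_div_cancel_left₀ _ h10ne]
  have c2 : cexp μ Yobs {ω | ZA ω = 0 ∧ ZB ω = 0} = ∫ ω, Y 0 0 ω ∂μ := by
    rw [cexp, hE00, setIntegral_congr_fun hE00m hYobs00,
      key_indep_setIntegral μ hVm hY00int hIndY00 hs00m, mul_div_cancel_left₀ _ h00ne]
  have c3 : cexp μ DAobs {ω | ZA ω = 1 ∧ ZB ω = 0} = ∫ ω, DA 1 0 ω ∂μ := by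
    rw [cexp, hE10, setIntegral_congr_fun hE10m hDAobs10,
      key_indep_setIntegral μ hVm hDA10int hIndDA hs10m, mul_div_cancel_left₀ _ h10ne]
  have c4 : cexp μ DAobs {ω | ZA ω = 0 ∧ ZB ω = 0} = 0 := by
    rw [cexp, hE00, setIntegral_congr_fun hE00m hDAobs00]
    simp
  rw [c1, c2, c3, c4]
  have hFsplit : ∫ ω, F ω ∂μ = (∫ ω, Y 0 0 ω ∂μ) + ∫ ω, G ω ∂μ :=
    integral_add hY00int hGint
  have hGval : ∫ ω, G ω ∂μ = ∫ ω in S, (Y 1 0 ω - Y 0 0 ω) ∂μ := by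
    rw [hGind, integral_indicator hSmeas]
  have hDAval : ∫ ω, DA 1 0 ω ∂μ = (μ S).toReal := by
    have : DA 1 0 = S.indicator (fun _ => (1 : ℝ)) := by
      ext ω
      rcases hDAbin 1 0 (Or.inr rfl) (Or.inl rfl) ω with h | h <;>
        simp [hSdef, Set.indicator, h]
    rw [this, integral_indicator hSmeas]
    simp [Measure.restrict_apply_univ, Measure.real]
  rw [hFsplit, hGval, hDAval, cexp]
  ring
end

section
/- (General decomposition of the reduced-form contrast.) Fix z∈{0,1}. Under the IV independence assumption, E[Y | Z_A=1,Z_B=z] − E[Y | Z_A=0,Z_B=z] = E[Δ_{A|B̄}·(D_A(1,z)−D_A(0,z))] + E[Δ_{B|Ā}·(D_B(1,z)−D_B(0,z))] + E[(Δ_{A|B}−Δ_{A|B̄})·(D_A(1,z)D_B(1,z)−D_A(0,z)D_B(0,z))], where Δ_{A|B̄}=Y(1,0)−Y(0,0), Δ_{B|Ā}=Y(0,1)−Y(0,0), Δ_{A|B}=Y(1,1)−Y(0,1). -/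
open MeasureTheory ProbabilityTheory

/-- Product with a 0/1-valued measurable function preserves integrability. -/
lemma int_mul_bin {Ω : Type*} [MeasurableSpace Ω] {μ : Measure Ω} {f D : Ω → ℝ}
    (hf : Integrable f μ) (hD : Measurable D) (hbin : ∀ ω, D ω = 0 ∨ D ω = 1) :
    Integrable (fun ω => f ω * D ω) μ := by
  have h := hf.bdd_mul hD.aestronglyMeasurable
    (c := 1) (Filter.Eventually.of_forall fun ω => by rcases hbin ω with h | h <;> simp [h])
  exact h.congr (Filter.Eventually.of_forall fun ω => mul_comm _ _)

theorem stmt_7 {Ω : Type*} [MeasurableSpace Ω] (μ : Measure Ω) [IsProbabilityMeasure μ]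
    (ZA ZB : Ω → ℝ) (DA DB : ℝ → ℝ → Ω → ℝ) (Y : ℝ → ℝ → Ω → ℝ)
    (DAobs DBobs Yobs : Ω → ℝ) (z : ℝ) (hz : z = 0 ∨ z = 1)
    (hZAm : Measurable ZA) (hZBm : Measurable ZB)
    (hZAbin : ∀ ω, ZA ω = 0 ∨ ZA ω = 1) (hZBbin : ∀ ω, ZB ω = 0 ∨ ZB ω = 1)
    (hDAm : ∀ z1 z2 : ℝ, (z1 = 0 ∨ z1 = 1) → (z2 = 0 ∨ z2 = 1) → Measurable (DA z1 z2))
    (hDBm : ∀ z1 z2 : ℝ, (z1 = 0 ∨ z1 = 1) → (z2 = 0 ∨ z2 = 1) → Measurable (DB z1 z2))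
    (hDAbin : ∀ z1 z2 : ℝ, (z1 = 0 ∨ z1 = 1) → (z2 = 0 ∨ z2 = 1) →
      ∀ ω, DA z1 z2 ω = 0 ∨ DA z1 z2 ω = 1)
    (hDBbin : ∀ z1 z2 : ℝ, (z1 = 0 ∨ z1 = 1) → (z2 = 0 ∨ z2 = 1) →
      ∀ ω, DB z1 z2 ω = 0 ∨ DB z1 z2 ω = 1)
    (hYm : ∀ d1 d2 : ℝ, (d1 = 0 ∨ d1 = 1) → (d2 = 0 ∨ d2 = 1) → Measurable (Y d1 d2))
    (hYint : ∀ d1 d2 : ℝ, (d1 = 0 ∨ d1 = 1) → (d2 = 0 ∨ d2 = 1) → Integrable (Y d1 d2) μ)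
    (hDAobs : ∀ ω, DAobs ω = DA (ZA ω) (ZB ω) ω)
    (hDBobs : ∀ ω, DBobs ω = DB (ZA ω) (ZB ω) ω)
    (hYobs : ∀ ω, Yobs ω = Y 0 0 ω + (Y 1 0 ω - Y 0 0 ω) * DAobs ω +
      (Y 0 1 ω - Y 0 0 ω) * DBobs ω +
      ((Y 1 1 ω - Y 0 1 ω) - (Y 1 0 ω - Y 0 0 ω)) * (DAobs ω * DBobs ω))
    (hindep : IndepFun (fun ω => (ZA ω, ZB ω))
      (fun ω => (Y 0 0 ω, Y 0 1 ω, Y 1 0 ω, Y 1 1 ω,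
        DA 0 0 ω, DA 0 1 ω, DA 1 0 ω, DA 1 1 ω,
        DB 0 0 ω, DB 0 1 ω, DB 1 0 ω, DB 1 1 ω)) μ)
    (hz1 : 0 < μ {ω | ZA ω = 1 ∧ ZB ω = z})
    (hz0 : 0 < μ {ω | ZA ω = 0 ∧ ZB ω = z}) :
    cexp μ Yobs {ω | ZA ω = 1 ∧ ZB ω = z} - cexp μ Yobs {ω | ZA ω = 0 ∧ ZB ω = z} =
      (∫ ω, (Y 1 0 ω - Y 0 0 ω) * (DA 1 z ω - DA 0 z ω) ∂μ) +
        (∫ ω, (Y 0 1 ω - Y 0 0 ω) * (DB 1 z ω - DB 0 z ω) ∂μ) +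
          ∫ ω, ((Y 1 1 ω - Y 0 1 ω) - (Y 1 0 ω - Y 0 0 ω)) *
            (DA 1 z ω * DB 1 z ω - DA 0 z ω * DB 0 z ω) ∂μ := by
  classical
  -- abbreviations
  set ΔA : Ω → ℝ := fun ω => Y 1 0 ω - Y 0 0 ω with hΔA
  set ΔB : Ω → ℝ := fun ω => Y 0 1 ω - Y 0 0 ω with hΔB
  set ΔI : Ω → ℝ := fun ω => (Y 1 1 ω - Y 0 1 ω) - (Y 1 0 ω - Y 0 0 ω) with hΔI
  have hΔAint : Integrable ΔA μ :=
    (hYint 1 0 (Or.inr rfl) (Or.inl rfl)).sub (hYint 0 0 (Or.inl rfl) (Or.inl rfl))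
  have hΔBint : Integrable ΔB μ :=
    (hYint 0 1 (Or.inl rfl) (Or.inr rfl)).sub (hYint 0 0 (Or.inl rfl) (Or.inl rfl))
  have hΔIint : Integrable ΔI μ :=
    (((hYint 1 1 (Or.inr rfl) (Or.inr rfl)).sub (hYint 0 1 (Or.inl rfl) (Or.inr rfl))).sub
      ((hYint 1 0 (Or.inr rfl) (Or.inl rfl)).sub (hYint 0 0 (Or.inl rfl) (Or.inl rfl))))
  -- W a : the observed outcome on the event ZA = a, ZB = z
  set W : ℝ → Ω → ℝ := fun a ω =>
    Y 0 0 ω + ΔA ω * DA a z ω + ΔB ω * DB a z ω + ΔI ω * (DA a z ω * DB a z ω) with hW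
  have h01 : (0:ℝ) = 0 ∨ (0:ℝ) = 1 := Or.inl rfl
  have h11 : (1:ℝ) = 0 ∨ (1:ℝ) = 1 := Or.inr rfl
  have hprodbin : ∀ a, (a = 0 ∨ a = 1) → ∀ ω,
      DA a z ω * DB a z ω = 0 ∨ DA a z ω * DB a z ω = 1 := by
    intro a ha ω
    rcases hDAbin a z ha hz ω with h | h <;> rcases hDBbin a z ha hz ω with h' | h' <;>
      simp [h, h']
  have hWint : ∀ a, (a = 0 ∨ a = 1) → Integrable (W a) μ := by
    intro a ha
    exact (((hYint 0 0 h01 h01).add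
      (int_mul_bin hΔAint (hDAm a z ha hz) (hDAbin a z ha hz))).add
      (int_mul_bin hΔBint (hDBm a z ha hz) (hDBbin a z ha hz))).add
      (int_mul_bin hΔIint ((hDAm a z ha hz).mul (hDBm a z ha hz)) (hprodbin a ha))
  -- key step: conditional expectation of Yobs equals the unconditional mean of W a
  have key : ∀ a : ℝ, (a = 0 ∨ a = 1) → 0 < μ {ω | ZA ω = a ∧ ZB ω = z} →
      cexp μ Yobs {ω | ZA ω = a ∧ ZB ω = z} = ∫ ω, W a ω ∂μ := by
    intro a ha hpos
    set E : Set Ω := {ω | ZA ω = a ∧ ZB ω = z} with hE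
    have hEmeas : MeasurableSet E :=
      ((hZAm (measurableSet_singleton a)).inter (hZBm (measurableSet_singleton z)))
    -- on E, Yobs = W a
    have hEq : Set.EqOn Yobs (W a) E := by
      intro ω hω
      obtain ⟨h1, h2⟩ := hω
      simp only [hW, hΔA, hΔB, hΔI]
      rw [hYobs ω, hDAobs ω, hDBobs ω, h1, h2]
    -- indicator function of E as a function of (ZA, ZB)
    set φ : ℝ × ℝ → ℝ := ({p : ℝ × ℝ | p.1 = a ∧ p.2 = z}).indicator (fun _ => (1:ℝ)) with hφ
    have hSmeas : MeasurableSet {p : ℝ × ℝ | p.1 = a ∧ p.2 = z} :=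
      (measurable_fst (measurableSet_singleton a)).inter
        (measurable_snd (measurableSet_singleton z))
    have hφm : Measurable φ := measurable_const.indicator hSmeas
    -- W a as a measurable function of the 12-tuple
    set g : ℝ × ℝ × ℝ × ℝ × ℝ × ℝ × ℝ × ℝ × ℝ × ℝ × ℝ × ℝ → ℝ := fun v =>
      (if a = 1 then
        v.1 + (v.2.2.1 - v.1) * (if z = 1 then v.2.2.2.2.2.2.2.1 else v.2.2.2.2.2.2.1)
          + (v.2.1 - v.1) * (if z = 1 then v.2.2.2.2.2.2.2.2.2.2.2 else v.2.2.2.2.2.2.2.2.2.2.1)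
          + ((v.2.2.2.1 - v.2.1) - (v.2.2.1 - v.1)) *
            ((if z = 1 then v.2.2.2.2.2.2.2.1 else v.2.2.2.2.2.2.1) *
             (if z = 1 then v.2.2.2.2.2.2.2.2.2.2.2 else v.2.2.2.2.2.2.2.2.2.2.1))
      else
        v.1 + (v.2.2.1 - v.1) * (if z = 1 then v.2.2.2.2.2.1 else v.2.2.2.2.1)
          + (v.2.1 - v.1) * (if z = 1 then v.2.2.2.2.2.2.2.2.2.1 else v.2.2.2.2.2.2.2.2.1)
          + ((v.2.2.2.1 - v.2.1) - (v.2.2.1 - v.1)) *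
            ((if z = 1 then v.2.2.2.2.2.1 else v.2.2.2.2.1) *
             (if z = 1 then v.2.2.2.2.2.2.2.2.2.1 else v.2.2.2.2.2.2.2.2.1))) with hg
    have hgm : Measurable g := by
      unfold g; split_ifs <;> fun_prop
    set T : Ω → ℝ × ℝ × ℝ × ℝ × ℝ × ℝ × ℝ × ℝ × ℝ × ℝ × ℝ × ℝ := fun ω =>
      (Y 0 0 ω, Y 0 1 ω, Y 1 0 ω, Y 1 1 ω,
        DA 0 0 ω, DA 0 1 ω, DA 1 0 ω, DA 1 1 ω,
        DB 0 0 ω, DB 0 1 ω, DB 1 0 ω, DB 1 1 ω) with hT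
    have hcomp : ∀ ω, g (T ω) = W a ω := by
      intro ω
      rcases ha with ha' | ha' <;> rcases hz with hz' | hz' <;>
        subst ha' <;> subst hz' <;>
        simp [hg, hT, hW, hΔA, hΔB, hΔI]
    have hTm : Measurable T :=
      (hYm 0 0 h01 h01).prodMk ((hYm 0 1 h01 h11).prodMk ((hYm 1 0 h11 h01).prodMk
        ((hYm 1 1 h11 h11).prodMk ((hDAm 0 0 h01 h01).prodMk ((hDAm 0 1 h01 h11).prodMk
        ((hDAm 1 0 h11 h01).prodMk ((hDAm 1 1 h11 h11).prodMk ((hDBm 0 0 h01 h01).prodMk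
        ((hDBm 0 1 h01 h11).prodMk ((hDBm 1 0 h11 h01).prodMk (hDBm 1 1 h11 h11)))))))))))
    have hindep' : IndepFun (fun ω => φ (ZA ω, ZB ω)) (fun ω => g (T ω)) μ :=
      hindep.comp hφm hgm
    have hmul : ∫ ω, φ (ZA ω, ZB ω) * g (T ω) ∂μ =
        (∫ ω, φ (ZA ω, ZB ω) ∂μ) * ∫ ω, g (T ω) ∂μ :=
      hindep'.integral_mul_eq_mul_integral
        (hφm.comp ((hZAm.prodMk hZBm))).aestronglyMeasurable
        (hgm.comp hTm).aestronglyMeasurable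
    have hind1 : ∀ ω, φ (ZA ω, ZB ω) * g (T ω) = E.indicator (W a) ω := by
      intro ω
      by_cases hω : ω ∈ E
      · have : (ZA ω, ZB ω) ∈ {p : ℝ × ℝ | p.1 = a ∧ p.2 = z} := hω
        simp [hφ, Set.indicator_of_mem, this, hω, hcomp ω]
      · have : (ZA ω, ZB ω) ∉ {p : ℝ × ℝ | p.1 = a ∧ p.2 = z} := hω
        simp [hφ, Set.indicator_of_notMem, this, hω]
    have hindint : ∫ ω, φ (ZA ω, ZB ω) ∂μ = (μ E).toReal := by
      have : ∀ ω, φ (ZA ω, ZB ω) = E.indicator (fun _ => (1:ℝ)) ω := by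
        intro ω
        by_cases hω : ω ∈ E
        · have h' : (ZA ω, ZB ω) ∈ {p : ℝ × ℝ | p.1 = a ∧ p.2 = z} := hω
          simp [hφ, Set.indicator_of_mem, h', hω]
        · have h' : (ZA ω, ZB ω) ∉ {p : ℝ × ℝ | p.1 = a ∧ p.2 = z} := hω
          simp [hφ, Set.indicator_of_notMem, h', hω]
      rw [integral_congr_ae (Filter.Eventually.of_forall this)]
      exact integral_indicator_one (μ := μ) hEmeas
    have hsetint : ∫ ω in E, Yobs ω ∂μ = (μ E).toReal * ∫ ω, W a ω ∂μ := by
      rw [setIntegral_congr_fun hEmeas hEq, ← integral_indicator hEmeas]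
      rw [integral_congr_ae (Filter.Eventually.of_forall fun ω => (hind1 ω).symm), hmul, hindint]
      congr 1
      exact integral_congr_ae (Filter.Eventually.of_forall hcomp)
    have hne : (μ E).toReal ≠ 0 := by
      have hfin : μ E ≠ ⊤ := (measure_lt_top μ E).ne
      simp [ENNReal.toReal_eq_zero_iff, hpos.ne', hfin]
    rw [cexp, hsetint, mul_comm, mul_div_assoc, div_self hne, mul_one]
  -- apply the key step to a = 1 and a = 0
  rw [key 1 h11 hz1, key 0 h01 hz0]
  -- expand both integrals and conclude by linearity
  have hsplit : ∀ a, (a = 0 ∨ a = 1) → ∫ ω, W a ω ∂μ =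
      (∫ ω, Y 0 0 ω ∂μ) + (∫ ω, ΔA ω * DA a z ω ∂μ) + (∫ ω, ΔB ω * DB a z ω ∂μ) +
        ∫ ω, ΔI ω * (DA a z ω * DB a z ω) ∂μ := by
    intro a ha
    have i1 := hYint 0 0 h01 h01
    have i2 := int_mul_bin hΔAint (hDAm a z ha hz) (hDAbin a z ha hz)
    have i3 := int_mul_bin hΔBint (hDBm a z ha hz) (hDBbin a z ha hz)
    have i4 := int_mul_bin (D := fun ω => DA a z ω * DB a z ω) hΔIint ((hDAm a z ha hz).mul (hDBm a z ha hz)) (hprodbin a ha)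
    have i1' : Integrable (fun ω => Y 0 0 ω) μ := i1
    have i12 : Integrable (fun ω => Y 0 0 ω + ΔA ω * DA a z ω) μ := i1'.add i2
    have i123 : Integrable (fun ω => Y 0 0 ω + ΔA ω * DA a z ω + ΔB ω * DB a z ω) μ := i12.add i3
    rw [hW]
    rw [integral_add i123 i4, integral_add i12 i3, integral_add i1' i2]
  rw [hsplit 1 h11, hsplit 0 h01]
  have e1 : ∫ ω, ΔA ω * (DA 1 z ω - DA 0 z ω) ∂μ =
      (∫ ω, ΔA ω * DA 1 z ω ∂μ) - ∫ ω, ΔA ω * DA 0 z ω ∂μ := by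
    rw [← integral_sub (int_mul_bin hΔAint (hDAm 1 z h11 hz) (hDAbin 1 z h11 hz))
      (int_mul_bin hΔAint (hDAm 0 z h01 hz) (hDAbin 0 z h01 hz))]
    exact integral_congr_ae (Filter.Eventually.of_forall fun ω => by ring)
  have e2 : ∫ ω, ΔB ω * (DB 1 z ω - DB 0 z ω) ∂μ =
      (∫ ω, ΔB ω * DB 1 z ω ∂μ) - ∫ ω, ΔB ω * DB 0 z ω ∂μ := by
    rw [← integral_sub (int_mul_bin hΔBint (hDBm 1 z h11 hz) (hDBbin 1 z h11 hz))
      (int_mul_bin hΔBint (hDBm 0 z h01 hz) (hDBbin 0 z h01 hz))]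
    exact integral_congr_ae (Filter.Eventually.of_forall fun ω => by ring)
  have e3 : ∫ ω, ΔI ω * (DA 1 z ω * DB 1 z ω - DA 0 z ω * DB 0 z ω) ∂μ =
      (∫ ω, ΔI ω * (DA 1 z ω * DB 1 z ω) ∂μ) - ∫ ω, ΔI ω * (DA 0 z ω * DB 0 z ω) ∂μ := by
    rw [← integral_sub
      (int_mul_bin (D := fun ω => DA 1 z ω * DB 1 z ω) hΔIint ((hDAm 1 z h11 hz).mul (hDBm 1 z h11 hz)) (hprodbin 1 h11))
      (int_mul_bin (D := fun ω => DA 0 z ω * DB 0 z ω) hΔIint ((hDAm 0 z h01 hz).mul (hDBm 0 z h01 hz)) (hprodbin 0 h01))]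
    exact integral_congr_ae (Filter.Eventually.of_forall fun ω => by ring)
  rw [e1, e2, e3]
  ring
end

section
/- (Wald estimand with monotone own instrument.) Fix z=0. Suppose (Z_A,Z_B) is independent of all potential outcomes and potential treatments, D_B satisfies one-sided noncompliance (D_B(z,0)=0), D_A(0,0) ≤ D_A(1,0) pointwise, and P(D_A(1,0)=1, D_A(0,0)=0)>0. Then (E[Y|Z_A=1,Z_B=0]−E[Y|Z_A=0,Z_B=0])/(E[D_A|Z_A=1,Z_B=0]−E[D_A|Z_A=0,Z_B=0]) = E[Y(1,0)−Y(0,0) | D_A(1,0)=1, D_A(0,0)=0]. -/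
open MeasureTheory ProbabilityTheory

theorem stmt_10 {Ω : Type*} [MeasurableSpace Ω] (μ : Measure Ω) [IsProbabilityMeasure μ]
    (ZA ZB : Ω → ℝ) (DA DB : ℝ → ℝ → Ω → ℝ) (Y : ℝ → ℝ → Ω → ℝ)
    (DAobs DBobs Yobs : Ω → ℝ)
    (hZAm : Measurable ZA) (hZBm : Measurable ZB)
    (hZAbin : ∀ ω, ZA ω = 0 ∨ ZA ω = 1) (hZBbin : ∀ ω, ZB ω = 0 ∨ ZB ω = 1)
    (hDAm : ∀ z1 z2 : ℝ, (z1 = 0 ∨ z1 = 1) → (z2 = 0 ∨ z2 = 1) → Measurable (DA z1 z2))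
    (hDBm : ∀ z1 z2 : ℝ, (z1 = 0 ∨ z1 = 1) → (z2 = 0 ∨ z2 = 1) → Measurable (DB z1 z2))
    (hDAbin : ∀ z1 z2 : ℝ, (z1 = 0 ∨ z1 = 1) → (z2 = 0 ∨ z2 = 1) →
      ∀ ω, DA z1 z2 ω = 0 ∨ DA z1 z2 ω = 1)
    (hDBbin : ∀ z1 z2 : ℝ, (z1 = 0 ∨ z1 = 1) → (z2 = 0 ∨ z2 = 1) →
      ∀ ω, DB z1 z2 ω = 0 ∨ DB z1 z2 ω = 1)
    (hYm : ∀ d1 d2 : ℝ, (d1 = 0 ∨ d1 = 1) → (d2 = 0 ∨ d2 = 1) → Measurable (Y d1 d2))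
    (hYint : ∀ d1 d2 : ℝ, (d1 = 0 ∨ d1 = 1) → (d2 = 0 ∨ d2 = 1) → Integrable (Y d1 d2) μ)
    (hDAobs : ∀ ω, DAobs ω = DA (ZA ω) (ZB ω) ω)
    (hDBobs : ∀ ω, DBobs ω = DB (ZA ω) (ZB ω) ω)
    (hYobs : ∀ ω, Yobs ω = Y (DAobs ω) (DBobs ω) ω)
    (hindep : IndepFun (fun ω => (ZA ω, ZB ω))
      (fun ω => (Y 0 0 ω, Y 0 1 ω, Y 1 0 ω, Y 1 1 ω,
        DA 0 0 ω, DA 0 1 ω, DA 1 0 ω, DA 1 1 ω,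
        DB 0 0 ω, DB 0 1 ω, DB 1 0 ω, DB 1 1 ω)) μ)
    (honcB : ∀ z : ℝ, (z = 0 ∨ z = 1) → ∀ ω, DB z 0 ω = 0)
    (hmono : ∀ ω, DA 0 0 ω ≤ DA 1 0 ω)
    (hz10 : 0 < μ {ω | ZA ω = 1 ∧ ZB ω = 0})
    (hz00 : 0 < μ {ω | ZA ω = 0 ∧ ZB ω = 0})
    (hfs : 0 < μ {ω | DA 1 0 ω = 1 ∧ DA 0 0 ω = 0}) :
    (cexp μ Yobs {ω | ZA ω = 1 ∧ ZB ω = 0} - cexp μ Yobs {ω | ZA ω = 0 ∧ ZB ω = 0}) /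
        (cexp μ DAobs {ω | ZA ω = 1 ∧ ZB ω = 0} - cexp μ DAobs {ω | ZA ω = 0 ∧ ZB ω = 0}) =
      cexp μ (fun ω => Y 1 0 ω - Y 0 0 ω) {ω | DA 1 0 ω = 1 ∧ DA 0 0 ω = 0} := by
  classical
  have h01 : (0:ℝ) = 0 ∨ (0:ℝ) = 1 := Or.inl rfl
  have h11 : (1:ℝ) = 0 ∨ (1:ℝ) = 1 := Or.inr rfl
  -- notation
  set W : Ω → ℝ × ℝ × ℝ × ℝ × ℝ × ℝ × ℝ × ℝ × ℝ × ℝ × ℝ × ℝ :=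
    fun ω => (Y 0 0 ω, Y 0 1 ω, Y 1 0 ω, Y 1 1 ω,
      DA 0 0 ω, DA 0 1 ω, DA 1 0 ω, DA 1 1 ω,
      DB 0 0 ω, DB 0 1 ω, DB 1 0 ω, DB 1 1 ω) with hWdef
  -- measurability of sets
  have hsetm : ∀ (f g : Ω → ℝ), Measurable f → Measurable g → ∀ a b : ℝ,
      MeasurableSet {ω | f ω = a ∧ g ω = b} := by
    intro f g hf hg a b
    have : {ω | f ω = a ∧ g ω = b} = f ⁻¹' {a} ∩ g ⁻¹' {b} := by
      ext ω; simp [Set.mem_inter_iff]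
    rw [this]
    exact (hf (measurableSet_singleton a)).inter (hg (measurableSet_singleton b))
  have hmE1 : MeasurableSet {ω | ZA ω = 1 ∧ ZB ω = 0} := hsetm _ _ hZAm hZBm 1 0
  have hmE0 : MeasurableSet {ω | ZA ω = 0 ∧ ZB ω = 0} := hsetm _ _ hZAm hZBm 0 0
  have hDA10m : Measurable (DA 1 0) := hDAm 1 0 h11 h01
  have hDA00m : Measurable (DA 0 0) := hDAm 0 0 h01 h01
  have hmC : MeasurableSet {ω | DA 1 0 ω = 1 ∧ DA 0 0 ω = 0} := hsetm _ _ hDA10m hDA00m 1 0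
  have hDA10bin : ∀ ω, DA 1 0 ω = 0 ∨ DA 1 0 ω = 1 := hDAbin 1 0 h11 h01
  have hDA00bin : ∀ ω, DA 0 0 ω = 0 ∨ DA 0 0 ω = 1 := hDAbin 0 0 h01 h01
  have hY10int : Integrable (Y 1 0) μ := hYint 1 0 h11 h01
  have hY00int : Integrable (Y 0 0) μ := hYint 0 0 h01 h01
  -- integrability helper: binary-valued f times integrable g
  have hbmul : ∀ (f g : Ω → ℝ), Measurable f → (∀ ω, f ω = 0 ∨ f ω = 1) → Integrable g μ →
      Integrable (fun ω => f ω * g ω) μ := by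
    intro f g hf hfb hg
    refine hg.bdd_mul (c := 1) hf.aestronglyMeasurable (Filter.Eventually.of_forall fun ω => ?_)
    rcases hfb ω with h | h <;> simp [h]
  have hbint : ∀ (f : Ω → ℝ), Measurable f → (∀ ω, f ω = 0 ∨ f ω = 1) → Integrable f μ := by
    intro f hf hfb
    have := hbmul f (fun _ => (1:ℝ)) hf hfb (integrable_const 1)
    simpa using this
  have hDA10int : Integrable (DA 1 0) μ := hbint _ hDA10m hDA10bin
  have hDA00int : Integrable (DA 0 0) μ := hbint _ hDA00m hDA00bin
  -- the key independence lemma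
  have key : ∀ (g : ℝ × ℝ × ℝ × ℝ × ℝ × ℝ × ℝ × ℝ × ℝ × ℝ × ℝ × ℝ → ℝ), Measurable g →
      Integrable (fun ω => g (W ω)) μ → ∀ za zb : ℝ,
      ∫ ω in {ω | ZA ω = za ∧ ZB ω = zb}, g (W ω) ∂μ
        = (μ {ω | ZA ω = za ∧ ZB ω = zb}).toReal * ∫ ω, g (W ω) ∂μ := by
    intro g hg hgint za zb
    set s : Set Ω := {ω | ZA ω = za ∧ ZB ω = zb} with hs
    have hsm : MeasurableSet s := hsetm _ _ hZAm hZBm za zb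
    set φ : ℝ × ℝ → ℝ := ({(za, zb)} : Set (ℝ × ℝ)).indicator (fun _ => 1) with hφdef
    have hφ : Measurable φ := measurable_const.indicator (measurableSet_singleton _)
    have hcomp : (fun ω => φ (ZA ω, ZB ω)) = s.indicator (fun _ => (1:ℝ)) := by
      funext ω
      by_cases h : ω ∈ s
      · have h2 : (ZA ω, ZB ω) = (za, zb) := Prod.ext h.1 h.2
        simp [hφdef, Set.indicator, h2, h]
      · have h2 : (ZA ω, ZB ω) ≠ (za, zb) := by
          intro hh
          exact h ⟨congrArg Prod.fst hh, congrArg Prod.snd hh⟩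
        simp [hφdef, Set.indicator, h2, h]
    have hindX : IndepFun (s.indicator (fun _ => (1:ℝ))) (fun ω => g (W ω)) μ := by
      have := hindep.comp hφ hg
      rwa [show (φ ∘ fun ω => (ZA ω, ZB ω)) = s.indicator (fun _ => (1:ℝ)) from hcomp] at this
    have hindint : Integrable (s.indicator (fun _ => (1:ℝ))) μ :=
      (integrable_const (1:ℝ)).indicator hsm
    have hre : ∫ ω in s, g (W ω) ∂μ
        = ∫ ω, (s.indicator (fun _ => (1:ℝ)) * fun ω => g (W ω)) ω ∂μ := by
      rw [← integral_indicator hsm]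
      congr 1
      funext ω
      by_cases h : ω ∈ s <;> simp [h]
    rw [hre, hindX.integral_mul_eq_mul_integral hindint.aestronglyMeasurable hgint.aestronglyMeasurable]
    congr 1
    rw [integral_indicator hsm]
    simp [measureReal_def]
  -- positivity of normalizers
  have hp1 : (μ {ω | ZA ω = 1 ∧ ZB ω = 0}).toReal ≠ 0 :=
    (ENNReal.toReal_pos hz10.ne' (measure_ne_top μ _)).ne'
  have hp0 : (μ {ω | ZA ω = 0 ∧ ZB ω = 0}).toReal ≠ 0 :=
    (ENNReal.toReal_pos hz00.ne' (measure_ne_top μ _)).ne'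
  -- the four relevant functions of the big vector
  set g1 : ℝ × ℝ × ℝ × ℝ × ℝ × ℝ × ℝ × ℝ × ℝ × ℝ × ℝ × ℝ → ℝ :=
    fun w => w.2.2.2.2.2.2.1 * w.2.2.1 + (1 - w.2.2.2.2.2.2.1) * w.1 with hg1def
  set g0 : ℝ × ℝ × ℝ × ℝ × ℝ × ℝ × ℝ × ℝ × ℝ × ℝ × ℝ × ℝ → ℝ :=
    fun w => w.2.2.2.2.1 * w.2.2.1 + (1 - w.2.2.2.2.1) * w.1 with hg0def
  set b1 : ℝ × ℝ × ℝ × ℝ × ℝ × ℝ × ℝ × ℝ × ℝ × ℝ × ℝ × ℝ → ℝ :=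
    fun w => w.2.2.2.2.2.2.1 with hb1def
  set b0 : ℝ × ℝ × ℝ × ℝ × ℝ × ℝ × ℝ × ℝ × ℝ × ℝ × ℝ × ℝ → ℝ :=
    fun w => w.2.2.2.2.1 with hb0def
  have hq1 : Measurable fun w : ℝ × ℝ × ℝ × ℝ × ℝ × ℝ × ℝ × ℝ × ℝ × ℝ × ℝ × ℝ => w.1 :=
    measurable_fst
  have hq3 : Measurable fun w : ℝ × ℝ × ℝ × ℝ × ℝ × ℝ × ℝ × ℝ × ℝ × ℝ × ℝ × ℝ => w.2.2.1 :=
    measurable_snd.snd.fst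
  have hq5 : Measurable fun w : ℝ × ℝ × ℝ × ℝ × ℝ × ℝ × ℝ × ℝ × ℝ × ℝ × ℝ × ℝ => w.2.2.2.2.1 :=
    measurable_snd.snd.snd.snd.fst
  have hq7 : Measurable fun w : ℝ × ℝ × ℝ × ℝ × ℝ × ℝ × ℝ × ℝ × ℝ × ℝ × ℝ × ℝ => w.2.2.2.2.2.2.1 :=
    measurable_snd.snd.snd.snd.snd.snd.fst
  have hg1m : Measurable g1 := ((hq7.mul hq3).add ((measurable_const.sub hq7).mul hq1))
  have hg0m : Measurable g0 := ((hq5.mul hq3).add ((measurable_const.sub hq5).mul hq1))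
  have hb1m : Measurable b1 := hq7
  have hb0m : Measurable b0 := hq5
  have hg1W : (fun ω => g1 (W ω)) =
      fun ω => DA 1 0 ω * Y 1 0 ω + (1 - DA 1 0 ω) * Y 0 0 ω := rfl
  have hg0W : (fun ω => g0 (W ω)) =
      fun ω => DA 0 0 ω * Y 1 0 ω + (1 - DA 0 0 ω) * Y 0 0 ω := rfl
  have hb1W : (fun ω => b1 (W ω)) = DA 1 0 := rfl
  have hb0W : (fun ω => b0 (W ω)) = DA 0 0 := rfl
  have hone : ∀ (f : Ω → ℝ), Measurable f → (∀ ω, f ω = 0 ∨ f ω = 1) →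
      Integrable (fun ω => (1 - f ω) * Y 0 0 ω) μ := by
    intro f hf hfb
    refine hbmul (fun ω => 1 - f ω) _ (measurable_const.sub hf) (fun ω => ?_) hY00int
    rcases hfb ω with h | h <;> simp [h]
  have hg1int : Integrable (fun ω => g1 (W ω)) μ := by
    rw [hg1W]
    exact (hbmul _ _ hDA10m hDA10bin hY10int).add (hone _ hDA10m hDA10bin)
  have hg0int : Integrable (fun ω => g0 (W ω)) μ := by
    rw [hg0W]
    exact (hbmul _ _ hDA00m hDA00bin hY10int).add (hone _ hDA00m hDA00bin)
  have hb1int : Integrable (fun ω => b1 (W ω)) μ := by rw [hb1W]; exact hDA10int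
  have hb0int : Integrable (fun ω => b0 (W ω)) μ := by rw [hb0W]; exact hDA00int
  -- observed quantities on the two instrument events
  have hYonE1 : Set.EqOn Yobs (fun ω => g1 (W ω)) {ω | ZA ω = 1 ∧ ZB ω = 0} := by
    intro ω hω
    obtain ⟨hzA, hzB⟩ := hω
    have hDB : DBobs ω = 0 := by rw [hDBobs, hzA, hzB, honcB 1 h11]
    have hDA : DAobs ω = DA 1 0 ω := by rw [hDAobs, hzA, hzB]
    show Yobs ω = DA 1 0 ω * Y 1 0 ω + (1 - DA 1 0 ω) * Y 0 0 ω
    rcases hDA10bin ω with h | h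
    · rw [hYobs, hDA, hDB, h]; ring
    · rw [hYobs, hDA, hDB, h]; ring
  have hYonE0 : Set.EqOn Yobs (fun ω => g0 (W ω)) {ω | ZA ω = 0 ∧ ZB ω = 0} := by
    intro ω hω
    obtain ⟨hzA, hzB⟩ := hω
    have hDB : DBobs ω = 0 := by rw [hDBobs, hzA, hzB, honcB 0 h01]
    have hDA : DAobs ω = DA 0 0 ω := by rw [hDAobs, hzA, hzB]
    show Yobs ω = DA 0 0 ω * Y 1 0 ω + (1 - DA 0 0 ω) * Y 0 0 ω
    rcases hDA00bin ω with h | h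
    · rw [hYobs, hDA, hDB, h]; ring
    · rw [hYobs, hDA, hDB, h]; ring
  have hDonE1 : Set.EqOn DAobs (fun ω => b1 (W ω)) {ω | ZA ω = 1 ∧ ZB ω = 0} := by
    intro ω hω
    show DAobs ω = DA 1 0 ω
    rw [hDAobs, hω.1, hω.2]
  have hDonE0 : Set.EqOn DAobs (fun ω => b0 (W ω)) {ω | ZA ω = 0 ∧ ZB ω = 0} := by
    intro ω hω
    show DAobs ω = DA 0 0 ω
    rw [hDAobs, hω.1, hω.2]
  -- compute the four conditional expectations
  have hc1 : cexp μ Yobs {ω | ZA ω = 1 ∧ ZB ω = 0} = ∫ ω, g1 (W ω) ∂μ := by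
    unfold cexp
    rw [setIntegral_congr_fun hmE1 hYonE1, key g1 hg1m hg1int 1 0,
      mul_comm, mul_div_assoc, div_self hp1, mul_one]
  have hc0 : cexp μ Yobs {ω | ZA ω = 0 ∧ ZB ω = 0} = ∫ ω, g0 (W ω) ∂μ := by
    unfold cexp
    rw [setIntegral_congr_fun hmE0 hYonE0, key g0 hg0m hg0int 0 0,
      mul_comm, mul_div_assoc, div_self hp0, mul_one]
  have hd1 : cexp μ DAobs {ω | ZA ω = 1 ∧ ZB ω = 0} = ∫ ω, b1 (W ω) ∂μ := by
    unfold cexp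
    rw [setIntegral_congr_fun hmE1 hDonE1, key b1 hb1m hb1int 1 0,
      mul_comm, mul_div_assoc, div_self hp1, mul_one]
  have hd0 : cexp μ DAobs {ω | ZA ω = 0 ∧ ZB ω = 0} = ∫ ω, b0 (W ω) ∂μ := by
    unfold cexp
    rw [setIntegral_congr_fun hmE0 hDonE0, key b0 hb0m hb0int 0 0,
      mul_comm, mul_div_assoc, div_self hp0, mul_one]
  -- numerator
  have hnum : (∫ ω, g1 (W ω) ∂μ) - (∫ ω, g0 (W ω) ∂μ)
      = ∫ ω in {ω | DA 1 0 ω = 1 ∧ DA 0 0 ω = 0}, (Y 1 0 ω - Y 0 0 ω) ∂μ := by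
    rw [← integral_sub hg1int hg0int, ← integral_indicator hmC]
    congr 1
    funext ω
    show DA 1 0 ω * Y 1 0 ω + (1 - DA 1 0 ω) * Y 0 0 ω
        - (DA 0 0 ω * Y 1 0 ω + (1 - DA 0 0 ω) * Y 0 0 ω)
        = Set.indicator {ω | DA 1 0 ω = 1 ∧ DA 0 0 ω = 0} (fun ω => Y 1 0 ω - Y 0 0 ω) ω
    rcases hDA10bin ω with h1 | h1 <;> rcases hDA00bin ω with h0 | h0
    · have : ω ∉ {ω | DA 1 0 ω = 1 ∧ DA 0 0 ω = 0} := by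
        intro hh; simp only [Set.mem_setOf_eq, h1, h0] at hh; norm_num at hh
      rw [Set.indicator_of_notMem this, h1, h0]; ring
    · exfalso; have := hmono ω; rw [h1, h0] at this; norm_num at this
    · have : ω ∈ {ω | DA 1 0 ω = 1 ∧ DA 0 0 ω = 0} := ⟨h1, h0⟩
      rw [Set.indicator_of_mem this, h1, h0]; ring
    · have : ω ∉ {ω | DA 1 0 ω = 1 ∧ DA 0 0 ω = 0} := by
        intro hh; simp only [Set.mem_setOf_eq, h1, h0] at hh; norm_num at hh
      rw [Set.indicator_of_notMem this, h1, h0]; ring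
  -- denominator
  have hden : (∫ ω, b1 (W ω) ∂μ) - (∫ ω, b0 (W ω) ∂μ)
      = (μ {ω | DA 1 0 ω = 1 ∧ DA 0 0 ω = 0}).toReal := by
    rw [← integral_sub hb1int hb0int]
    have : (fun ω => b1 (W ω) - b0 (W ω))
        = Set.indicator {ω | DA 1 0 ω = 1 ∧ DA 0 0 ω = 0} (fun _ => (1:ℝ)) := by
      funext ω
      show DA 1 0 ω - DA 0 0 ω = _
      rcases hDA10bin ω with h1 | h1 <;> rcases hDA00bin ω with h0 | h0
      · have : ω ∉ {ω | DA 1 0 ω = 1 ∧ DA 0 0 ω = 0} := by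
          intro hh; simp only [Set.mem_setOf_eq, h1, h0] at hh; norm_num at hh
        rw [Set.indicator_of_notMem this, h1, h0]; ring
      · exfalso; have := hmono ω; rw [h1, h0] at this; norm_num at this
      · have : ω ∈ {ω | DA 1 0 ω = 1 ∧ DA 0 0 ω = 0} := ⟨h1, h0⟩
        rw [Set.indicator_of_mem this, h1, h0]; ring
      · have : ω ∉ {ω | DA 1 0 ω = 1 ∧ DA 0 0 ω = 0} := by
          intro hh; simp only [Set.mem_setOf_eq, h1, h0] at hh; norm_num at hh
        rw [Set.indicator_of_notMem this, h1, h0]; ring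
    rw [this, integral_indicator hmC]
    simp [measureReal_def]
  rw [hc1, hc0, hd1, hd0, hnum, hden]
  unfold cexp

  rfl
end

section
/- (Upper and lower bound for E[Y(0,0)|(c,c)].) Under the IV, one-sided noncompliance, first-stage, and bounded-outcome assumptions with monotone treatment response (Y(1,0)≥Y(0,0)≥0 and Y(0,1)≥Y(0,0)≥0), the conditional mean E[Y(0,0) | C_A∩C_B] satisfies L ≤ E[Y(0,0)|C_A∩C_B] ≤ U where U = (E[Y(0,0)] − E[Y(0,0)|C_A^c∩C_B^c]·P(C_A^c∩C_B^c))/P(C_A∩C_B) and L = U − (E[Y(1,0)|C_A∩C_B^c]·P(C_A∩C_B^c) + E[Y(0,1)|C_A^c∩C_B]·P(C_A^c∩C_B))/P(C_A∩C_B). -/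
open MeasureTheory ProbabilityTheory

theorem stmt_11 {Ω : Type*} [MeasurableSpace Ω] (μ : Measure Ω) [IsProbabilityMeasure μ]
    (ZA ZB : Ω → ℝ) (DA DB : ℝ → ℝ → Ω → ℝ) (Y : ℝ → ℝ → Ω → ℝ)
    (DAobs DBobs Yobs : Ω → ℝ)
    (hZAm : Measurable ZA) (hZBm : Measurable ZB)
    (hZAbin : ∀ ω, ZA ω = 0 ∨ ZA ω = 1) (hZBbin : ∀ ω, ZB ω = 0 ∨ ZB ω = 1)
    (hDAm : ∀ z1 z2 : ℝ, (z1 = 0 ∨ z1 = 1) → (z2 = 0 ∨ z2 = 1) → Measurable (DA z1 z2))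
    (hDBm : ∀ z1 z2 : ℝ, (z1 = 0 ∨ z1 = 1) → (z2 = 0 ∨ z2 = 1) → Measurable (DB z1 z2))
    (hDAbin : ∀ z1 z2 : ℝ, (z1 = 0 ∨ z1 = 1) → (z2 = 0 ∨ z2 = 1) →
      ∀ ω, DA z1 z2 ω = 0 ∨ DA z1 z2 ω = 1)
    (hDBbin : ∀ z1 z2 : ℝ, (z1 = 0 ∨ z1 = 1) → (z2 = 0 ∨ z2 = 1) →
      ∀ ω, DB z1 z2 ω = 0 ∨ DB z1 z2 ω = 1)
    (hYm : ∀ d1 d2 : ℝ, (d1 = 0 ∨ d1 = 1) → (d2 = 0 ∨ d2 = 1) → Measurable (Y d1 d2))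
    (hYint : ∀ d1 d2 : ℝ, (d1 = 0 ∨ d1 = 1) → (d2 = 0 ∨ d2 = 1) → Integrable (Y d1 d2) μ)
    (hDAobs : ∀ ω, DAobs ω = DA (ZA ω) (ZB ω) ω)
    (hDBobs : ∀ ω, DBobs ω = DB (ZA ω) (ZB ω) ω)
    (hYobs : ∀ ω, Yobs ω = Y (DAobs ω) (DBobs ω) ω)
    (hindep : IndepFun (fun ω => (ZA ω, ZB ω))
      (fun ω => (Y 0 0 ω, Y 0 1 ω, Y 1 0 ω, Y 1 1 ω,
        DA 0 0 ω, DA 0 1 ω, DA 1 0 ω, DA 1 1 ω,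
        DB 0 0 ω, DB 0 1 ω, DB 1 0 ω, DB 1 1 ω)) μ)
    (honcA : ∀ z : ℝ, (z = 0 ∨ z = 1) → ∀ ω, DA 0 z ω = 0)
    (honcB : ∀ z : ℝ, (z = 0 ∨ z = 1) → ∀ ω, DB z 0 ω = 0)
    (K : ℝ) (hK : 0 < K)
    (hbdd : ∀ d1 d2 : ℝ, (d1 = 0 ∨ d1 = 1) → (d2 = 0 ∨ d2 = 1) →
      ∀ᵐ ω ∂μ, 0 ≤ Y d1 d2 ω ∧ Y d1 d2 ω ≤ K)
    (hmtr10 : ∀ᵐ ω ∂μ, Y 0 0 ω ≤ Y 1 0 ω) (hmtr01 : ∀ᵐ ω ∂μ, Y 0 0 ω ≤ Y 0 1 ω)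
    (CA CB : Set Ω) (hCA : CA = {ω | DA 1 1 ω = 1}) (hCB : CB = {ω | DB 1 1 ω = 1})
    (hcc : 0 < μ (CA ∩ CB))
    (U L : ℝ)
    (hU : U = ((∫ ω, Y 0 0 ω ∂μ) -
      cexp μ (fun ω => Y 0 0 ω) (CAᶜ ∩ CBᶜ) * (μ (CAᶜ ∩ CBᶜ)).toReal) / (μ (CA ∩ CB)).toReal)
    (hL : L = U - (cexp μ (fun ω => Y 1 0 ω) (CA ∩ CBᶜ) * (μ (CA ∩ CBᶜ)).toReal +
      cexp μ (fun ω => Y 0 1 ω) (CAᶜ ∩ CB) * (μ (CAᶜ ∩ CB)).toReal) / (μ (CA ∩ CB)).toReal) :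
    L ≤ cexp μ (fun ω => Y 0 0 ω) (CA ∩ CB) ∧ cexp μ (fun ω => Y 0 0 ω) (CA ∩ CB) ≤ U := by
  classical
  have hCAms : MeasurableSet CA := by
    rw [hCA]
    exact (hDAm 1 1 (Or.inr rfl) (Or.inr rfl)) (measurableSet_singleton 1)
  have hCBms : MeasurableSet CB := by
    rw [hCB]
    exact (hDBm 1 1 (Or.inr rfl) (Or.inr rfl)) (measurableSet_singleton 1)
  set p : ℝ := (μ (CA ∩ CB)).toReal with hpdef
  have hp : 0 < p := ENNReal.toReal_pos (ne_of_gt hcc) (measure_ne_top μ _)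
  have int00 : Integrable (Y 0 0) μ := hYint 0 0 (Or.inl rfl) (Or.inl rfl)
  have int10 : Integrable (Y 1 0) μ := hYint 1 0 (Or.inr rfl) (Or.inl rfl)
  have int01 : Integrable (Y 0 1) μ := hYint 0 1 (Or.inl rfl) (Or.inr rfl)
  have hnn : 0 ≤ᵐ[μ] Y 0 0 := (hbdd 0 0 (Or.inl rfl) (Or.inl rfl)).mono fun ω h => h.1
  -- cexp * measure = set integral
  have cexp_mul : ∀ (X : Ω → ℝ) (E : Set Ω),
      cexp μ X E * (μ E).toReal = ∫ ω in E, X ω ∂μ := by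
    intro X E
    unfold cexp
    rcases eq_or_ne (μ E) 0 with h | h
    · rw [Measure.restrict_eq_zero.mpr h]
      simp [h]
    · rw [div_mul_cancel₀]
      exact ENNReal.toReal_ne_zero.mpr ⟨h, measure_ne_top μ E⟩
  -- split a set integral over a measurable set by intersection with CB and CBᶜ
  have hsplitB : ∀ (g : Ω → ℝ) (s : Set Ω), Integrable g μ → MeasurableSet s →
      (∫ ω in s, g ω ∂μ) = (∫ ω in s ∩ CB, g ω ∂μ) + (∫ ω in s ∩ CBᶜ, g ω ∂μ) := by
    intro g s hg hs
    rw [Set.inter_comm s CB, Set.inter_comm s CBᶜ, ← Measure.restrict_restrict hCBms,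
      ← Measure.restrict_restrict hCBms.compl]
    exact (integral_add_compl hCBms hg.restrict).symm
  have hdecomp : (∫ ω, Y 0 0 ω ∂μ)
      = (∫ ω in CA ∩ CB, Y 0 0 ω ∂μ) + (∫ ω in CA ∩ CBᶜ, Y 0 0 ω ∂μ)
        + ((∫ ω in CAᶜ ∩ CB, Y 0 0 ω ∂μ) + (∫ ω in CAᶜ ∩ CBᶜ, Y 0 0 ω ∂μ)) := by
    rw [← hsplitB _ CA int00 hCAms, ← hsplitB _ CAᶜ int00 hCAms.compl]
    exact (integral_add_compl hCAms int00).symm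
  have hAnn : 0 ≤ ∫ ω in CA ∩ CBᶜ, Y 0 0 ω ∂μ := setIntegral_nonneg_of_ae hnn
  have hBnn : 0 ≤ ∫ ω in CAᶜ ∩ CB, Y 0 0 ω ∂μ := setIntegral_nonneg_of_ae hnn
  have hUeq : U = ((∫ ω in CA ∩ CB, Y 0 0 ω ∂μ) + (∫ ω in CA ∩ CBᶜ, Y 0 0 ω ∂μ)
      + (∫ ω in CAᶜ ∩ CB, Y 0 0 ω ∂μ)) / p := by
    rw [hU, cexp_mul, hdecomp]; ring_nf
  have hcexp : cexp μ (fun ω => Y 0 0 ω) (CA ∩ CB) = (∫ ω in CA ∩ CB, Y 0 0 ω ∂μ) / p := rfl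
  constructor
  · -- lower bound
    rw [hL, hUeq, cexp_mul, cexp_mul, hcexp, sub_le_iff_le_add, ← add_div,
      div_le_div_iff_of_pos_right hp]
    have h10 : (∫ ω in CA ∩ CBᶜ, Y 0 0 ω ∂μ) ≤ ∫ ω in CA ∩ CBᶜ, Y 1 0 ω ∂μ :=
      setIntegral_mono_ae int00.integrableOn int10.integrableOn hmtr10
    have h01 : (∫ ω in CAᶜ ∩ CB, Y 0 0 ω ∂μ) ≤ ∫ ω in CAᶜ ∩ CB, Y 0 1 ω ∂μ :=
      setIntegral_mono_ae int00.integrableOn int01.integrableOn hmtr01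
    linarith
  · rw [hUeq, hcexp, div_le_div_iff_of_pos_right hp]
    linarith
end

section
/- (Reduced-form interaction coefficient.) Under IV independence, one-sided noncompliance for both treatments, and the first-stage conditions, the coefficient π_{AB} := (E[Y|Z_A=1,Z_B=1]−E[Y|Z_A=0,Z_B=1]) − (E[Y|Z_A=1,Z_B=0]−E[Y|Z_A=0,Z_B=0]) satisfies π_{AB} = E[(Y(1,1)−Y(0,1)−Y(1,0)+Y(0,0))·1_{C_A∩C_B}] + E[(Y(1,0)−Y(0,0))·1_{J_A}] − E[(Y(1,0)−Y(0,0))·1_{Dd_A}] + E[(Y(0,1)−Y(0,0))·1_{J_B}] − E[(Y(0,1)−Y(0,0))·1_{Dd_B}], where C_A={D_A(1,1)=1}, J_A={D_A(1,0)=0, D_A(1,1)=1}, Dd_A={D_A(1,0)=1, D_A(1,1)=0}, and C_B, J_B, Dd_B are defined symmetrically. -/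
open MeasureTheory ProbabilityTheory

theorem stmt_15 {Ω : Type*} [MeasurableSpace Ω] (μ : Measure Ω) [IsProbabilityMeasure μ]
    (ZA ZB : Ω → ℝ) (DA DB : ℝ → ℝ → Ω → ℝ) (Y : ℝ → ℝ → Ω → ℝ)
    (DAobs DBobs Yobs : Ω → ℝ)
    (hZAm : Measurable ZA) (hZBm : Measurable ZB)
    (hZAbin : ∀ ω, ZA ω = 0 ∨ ZA ω = 1) (hZBbin : ∀ ω, ZB ω = 0 ∨ ZB ω = 1)
    (hDAm : ∀ z1 z2 : ℝ, (z1 = 0 ∨ z1 = 1) → (z2 = 0 ∨ z2 = 1) → Measurable (DA z1 z2))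
    (hDBm : ∀ z1 z2 : ℝ, (z1 = 0 ∨ z1 = 1) → (z2 = 0 ∨ z2 = 1) → Measurable (DB z1 z2))
    (hDAbin : ∀ z1 z2 : ℝ, (z1 = 0 ∨ z1 = 1) → (z2 = 0 ∨ z2 = 1) →
      ∀ ω, DA z1 z2 ω = 0 ∨ DA z1 z2 ω = 1)
    (hDBbin : ∀ z1 z2 : ℝ, (z1 = 0 ∨ z1 = 1) → (z2 = 0 ∨ z2 = 1) →
      ∀ ω, DB z1 z2 ω = 0 ∨ DB z1 z2 ω = 1)
    (hYm : ∀ d1 d2 : ℝ, (d1 = 0 ∨ d1 = 1) → (d2 = 0 ∨ d2 = 1) → Measurable (Y d1 d2))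
    (hYint : ∀ d1 d2 : ℝ, (d1 = 0 ∨ d1 = 1) → (d2 = 0 ∨ d2 = 1) → Integrable (Y d1 d2) μ)
    (hDAobs : ∀ ω, DAobs ω = DA (ZA ω) (ZB ω) ω)
    (hDBobs : ∀ ω, DBobs ω = DB (ZA ω) (ZB ω) ω)
    (hYobs : ∀ ω, Yobs ω = Y (DAobs ω) (DBobs ω) ω)
    (hindep : IndepFun (fun ω => (ZA ω, ZB ω))
      (fun ω => (Y 0 0 ω, Y 0 1 ω, Y 1 0 ω, Y 1 1 ω,
        DA 0 0 ω, DA 0 1 ω, DA 1 0 ω, DA 1 1 ω,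
        DB 0 0 ω, DB 0 1 ω, DB 1 0 ω, DB 1 1 ω)) μ)
    (honcA : ∀ z : ℝ, (z = 0 ∨ z = 1) → ∀ ω, DA 0 z ω = 0)
    (honcB : ∀ z : ℝ, (z = 0 ∨ z = 1) → ∀ ω, DB z 0 ω = 0)
    (hz00 : 0 < μ {ω | ZA ω = 0 ∧ ZB ω = 0}) (hz01 : 0 < μ {ω | ZA ω = 0 ∧ ZB ω = 1})
    (hz10 : 0 < μ {ω | ZA ω = 1 ∧ ZB ω = 0}) (hz11 : 0 < μ {ω | ZA ω = 1 ∧ ZB ω = 1})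
    (CA CB JA JB DdA DdB : Set Ω)
    (hCA : CA = {ω | DA 1 1 ω = 1}) (hCB : CB = {ω | DB 1 1 ω = 1})
    (hJA : JA = {ω | DA 1 0 ω = 0 ∧ DA 1 1 ω = 1})
    (hDdA : DdA = {ω | DA 1 0 ω = 1 ∧ DA 1 1 ω = 0})
    (hJB : JB = {ω | DB 0 1 ω = 0 ∧ DB 1 1 ω = 1})
    (hDdB : DdB = {ω | DB 0 1 ω = 1 ∧ DB 1 1 ω = 0})
    (πAB : ℝ)
    (hπ : πAB = (cexp μ Yobs {ω | ZA ω = 1 ∧ ZB ω = 1} -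
        cexp μ Yobs {ω | ZA ω = 0 ∧ ZB ω = 1}) -
      (cexp μ Yobs {ω | ZA ω = 1 ∧ ZB ω = 0} -
        cexp μ Yobs {ω | ZA ω = 0 ∧ ZB ω = 0})) :
    πAB = (∫ ω in CA ∩ CB, (Y 1 1 ω - Y 0 1 ω - Y 1 0 ω + Y 0 0 ω) ∂μ) +
      (∫ ω in JA, (Y 1 0 ω - Y 0 0 ω) ∂μ) - (∫ ω in DdA, (Y 1 0 ω - Y 0 0 ω) ∂μ) +
        (∫ ω in JB, (Y 0 1 ω - Y 0 0 ω) ∂μ) - ∫ ω in DdB, (Y 0 1 ω - Y 0 0 ω) ∂μ := by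

  have or0 : (0:ℝ) = 0 ∨ (0:ℝ) = 1 := Or.inl rfl
  have or1 : (1:ℝ) = 0 ∨ (1:ℝ) = 1 := Or.inr rfl
  set T : Ω → ℝ×ℝ×ℝ×ℝ×ℝ×ℝ×ℝ×ℝ×ℝ×ℝ×ℝ×ℝ := fun ω =>
    (Y 0 0 ω, Y 0 1 ω, Y 1 0 ω, Y 1 1 ω, DA 0 0 ω, DA 0 1 ω, DA 1 0 ω, DA 1 1 ω,
      DB 0 0 ω, DB 0 1 ω, DB 1 0 ω, DB 1 1 ω) with hTdef
  have hTm : Measurable T := by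
    refine (hYm 0 0 or0 or0).prodMk ((hYm 0 1 or0 or1).prodMk ((hYm 1 0 or1 or0).prodMk
      ((hYm 1 1 or1 or1).prodMk ((hDAm 0 0 or0 or0).prodMk ((hDAm 0 1 or0 or1).prodMk
      ((hDAm 1 0 or1 or0).prodMk ((hDAm 1 1 or1 or1).prodMk ((hDBm 0 0 or0 or0).prodMk
      ((hDBm 0 1 or0 or1).prodMk ((hDBm 1 0 or1 or0).prodMk (hDBm 1 1 or1 or1)))))))))))
  -- key factorization lemma
  have key : ∀ (a b : ℝ) (W : Ω → ℝ) (g : ℝ×ℝ×ℝ×ℝ×ℝ×ℝ×ℝ×ℝ×ℝ×ℝ×ℝ×ℝ → ℝ),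
      Measurable g → (∀ ω, W ω = g (T ω)) →
      (∀ ω, ZA ω = a → ZB ω = b → Yobs ω = W ω) →
      0 < μ {ω | ZA ω = a ∧ ZB ω = b} →
      cexp μ Yobs {ω | ZA ω = a ∧ ZB ω = b} = ∫ ω, W ω ∂μ := by
    intro a b W g hgm hWg hYW hpos
    set S : Set Ω := {ω | ZA ω = a ∧ ZB ω = b} with hSdef
    have hSm : MeasurableSet S :=
      (hZAm (measurableSet_singleton a)).inter (hZBm (measurableSet_singleton b))
    set φ : ℝ × ℝ → ℝ := ({(a, b)} : Set (ℝ × ℝ)).indicator (fun _ => 1) with hφdef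
    have hφm : Measurable φ := measurable_const.indicator (measurableSet_singleton _)
    have hmem : ∀ ω, ((ZA ω, ZB ω) ∈ ({(a, b)} : Set (ℝ × ℝ))) ↔ ω ∈ S := by
      intro ω
      simp [hSdef, Prod.ext_iff]
    have hindep2 : IndepFun (φ ∘ fun ω => (ZA ω, ZB ω)) (g ∘ T) μ := hindep.comp hφm hgm
    have hmul := hindep2.integral_mul_eq_mul_integral
      ((hφm.comp (hZAm.prodMk hZBm)).aestronglyMeasurable)
      ((hgm.comp hTm).aestronglyMeasurable)
    have e1 : ∀ ω, φ (ZA ω, ZB ω) * g (T ω) = S.indicator W ω := by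
      intro ω
      by_cases hω : ω ∈ S
      · rw [hφdef, Set.indicator_of_mem ((hmem ω).mpr hω), Set.indicator_of_mem hω, one_mul,
          ← hWg ω]
      · rw [hφdef, Set.indicator_of_notMem (fun h => hω ((hmem ω).mp h)),
          Set.indicator_of_notMem hω, zero_mul]
    have eφ : integral μ (φ ∘ fun ω => (ZA ω, ZB ω)) = (μ S).toReal := by
      have hfe : (φ ∘ fun ω => (ZA ω, ZB ω)) = S.indicator (fun _ => (1:ℝ)) := by
        funext ω
        by_cases hω : ω ∈ S
        · rw [Function.comp_apply, hφdef, Set.indicator_of_mem ((hmem ω).mpr hω),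
            Set.indicator_of_mem hω]
        · rw [Function.comp_apply, hφdef, Set.indicator_of_notMem (fun h => hω ((hmem ω).mp h)),
            Set.indicator_of_notMem hω]
      rw [hfe, integral_indicator hSm]
      simp [Measure.real]
    have h2 : ∫ ω in S, W ω ∂μ = (μ S).toReal * ∫ ω, W ω ∂μ := by
      have e3 : integral μ ((φ ∘ fun ω => (ZA ω, ZB ω)) * (g ∘ T)) = ∫ ω in S, W ω ∂μ := by
        rw [← integral_indicator hSm]
        exact integral_congr_ae (Filter.Eventually.of_forall fun ω => e1 ω)
      rw [← e3, hmul, eφ]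
      exact congrArg (fun r => (μ S).toReal * r)
        (integral_congr_ae (Filter.Eventually.of_forall fun ω => (hWg ω).symm))
    have h1 : ∫ ω in S, Yobs ω ∂μ = ∫ ω in S, W ω ∂μ :=
      setIntegral_congr_fun hSm fun ω hω => hYW ω hω.1 hω.2
    have hne : (μ S).toReal ≠ 0 := (ENNReal.toReal_pos hpos.ne' (measure_ne_top μ S)).ne'
    rw [cexp, h1, h2, mul_comm, mul_div_assoc, div_self hne, mul_one]
  -- apply key to the four cells
  have k00 : cexp μ Yobs {ω | ZA ω = 0 ∧ ZB ω = 0} = ∫ ω, Y 0 0 ω ∂μ := by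
    refine key 0 0 (fun ω => Y 0 0 ω) (fun p => p.1) measurable_fst (fun ω => rfl) ?_ hz00
    intro ω ha hb
    rw [hYobs ω, hDAobs ω, hDBobs ω, ha, hb, honcA 0 or0 ω, honcB 0 or0 ω]
  have k10 : cexp μ Yobs {ω | ZA ω = 1 ∧ ZB ω = 0} =
      ∫ ω, (Y 0 0 ω + (Y 1 0 ω - Y 0 0 ω) * DA 1 0 ω) ∂μ := by
    refine key 1 0 (fun ω => Y 0 0 ω + (Y 1 0 ω - Y 0 0 ω) * DA 1 0 ω)
      (fun p => p.1 + (p.2.2.1 - p.1) * p.2.2.2.2.2.2.1) (by fun_prop) (fun ω => rfl) ?_ hz10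
    intro ω ha hb
    rw [hYobs ω, hDAobs ω, hDBobs ω, ha, hb, honcB 1 or1 ω]
    rcases hDAbin 1 0 or1 or0 ω with h | h <;> simp only [h] <;> ring
  have k01 : cexp μ Yobs {ω | ZA ω = 0 ∧ ZB ω = 1} =
      ∫ ω, (Y 0 0 ω + (Y 0 1 ω - Y 0 0 ω) * DB 0 1 ω) ∂μ := by
    refine key 0 1 (fun ω => Y 0 0 ω + (Y 0 1 ω - Y 0 0 ω) * DB 0 1 ω)
      (fun p => p.1 + (p.2.1 - p.1) * p.2.2.2.2.2.2.2.2.2.1) (by fun_prop) (fun ω => rfl) ?_ hz01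
    intro ω ha hb
    rw [hYobs ω, hDAobs ω, hDBobs ω, ha, hb, honcA 1 or1 ω]
    rcases hDBbin 0 1 or0 or1 ω with h | h <;> simp only [h] <;> ring
  have k11 : cexp μ Yobs {ω | ZA ω = 1 ∧ ZB ω = 1} =
      ∫ ω, (Y 0 0 ω + (Y 1 0 ω - Y 0 0 ω) * DA 1 1 ω + (Y 0 1 ω - Y 0 0 ω) * DB 1 1 ω +
        (Y 1 1 ω - Y 0 1 ω - Y 1 0 ω + Y 0 0 ω) * (DA 1 1 ω * DB 1 1 ω)) ∂μ := by
    refine key 1 1 (fun ω => Y 0 0 ω + (Y 1 0 ω - Y 0 0 ω) * DA 1 1 ω +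
        (Y 0 1 ω - Y 0 0 ω) * DB 1 1 ω +
        (Y 1 1 ω - Y 0 1 ω - Y 1 0 ω + Y 0 0 ω) * (DA 1 1 ω * DB 1 1 ω))
      (fun p => p.1 + (p.2.2.1 - p.1) * p.2.2.2.2.2.2.2.1 +
        (p.2.1 - p.1) * p.2.2.2.2.2.2.2.2.2.2.2 +
        (p.2.2.2.1 - p.2.1 - p.2.2.1 + p.1) *
          (p.2.2.2.2.2.2.2.1 * p.2.2.2.2.2.2.2.2.2.2.2))
      (by fun_prop) (fun ω => rfl) ?_ hz11
    intro ω ha hb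
    rw [hYobs ω, hDAobs ω, hDBobs ω, ha, hb]
    rcases hDAbin 1 1 or1 or1 ω with h1 | h1 <;> rcases hDBbin 1 1 or1 or1 ω with h2 | h2 <;>
      simp only [h1, h2] <;> ring
  -- integrability helpers
  have hY00i := hYint 0 0 or0 or0
  have hY01i := hYint 0 1 or0 or1
  have hY10i := hYint 1 0 or1 or0
  have hY11i := hYint 1 1 or1 or1
  have hbin_mul : ∀ (f g : Ω → ℝ), Integrable f μ → Measurable g →
      (∀ ω, g ω = 0 ∨ g ω = 1) → Integrable (fun ω => f ω * g ω) μ := by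
    intro f g hf hg hb
    have h := Integrable.bdd_mul hf hg.aestronglyMeasurable
      (c := 1) (Filter.Eventually.of_forall fun ω => by rcases hb ω with h | h <;> simp [h])
    simpa [mul_comm] using h
  have bCC : ∀ ω, DA 1 1 ω * DB 1 1 ω = 0 ∨ DA 1 1 ω * DB 1 1 ω = 1 := by
    intro ω
    rcases hDAbin 1 1 or1 or1 ω with h1 | h1 <;> rcases hDBbin 1 1 or1 or1 ω with h2 | h2 <;>
      simp [h1, h2]
  have bJA : ∀ ω, (1 - DA 1 0 ω) * DA 1 1 ω = 0 ∨ (1 - DA 1 0 ω) * DA 1 1 ω = 1 := by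
    intro ω
    rcases hDAbin 1 0 or1 or0 ω with h1 | h1 <;> rcases hDAbin 1 1 or1 or1 ω with h2 | h2 <;>
      simp [h1, h2]
  have bDdA : ∀ ω, DA 1 0 ω * (1 - DA 1 1 ω) = 0 ∨ DA 1 0 ω * (1 - DA 1 1 ω) = 1 := by
    intro ω
    rcases hDAbin 1 0 or1 or0 ω with h1 | h1 <;> rcases hDAbin 1 1 or1 or1 ω with h2 | h2 <;>
      simp [h1, h2]
  have bJB : ∀ ω, (1 - DB 0 1 ω) * DB 1 1 ω = 0 ∨ (1 - DB 0 1 ω) * DB 1 1 ω = 1 := by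
    intro ω
    rcases hDBbin 0 1 or0 or1 ω with h1 | h1 <;> rcases hDBbin 1 1 or1 or1 ω with h2 | h2 <;>
      simp [h1, h2]
  have bDdB : ∀ ω, DB 0 1 ω * (1 - DB 1 1 ω) = 0 ∨ DB 0 1 ω * (1 - DB 1 1 ω) = 1 := by
    intro ω
    rcases hDBbin 0 1 or0 or1 ω with h1 | h1 <;> rcases hDBbin 1 1 or1 or1 ω with h2 | h2 <;>
      simp [h1, h2]
  have hW00i : Integrable (fun ω => Y 0 0 ω) μ := hY00i
  have hW10i : Integrable (fun ω => Y 0 0 ω + (Y 1 0 ω - Y 0 0 ω) * DA 1 0 ω) μ :=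
    hY00i.add (hbin_mul _ _ (hY10i.sub hY00i) (hDAm 1 0 or1 or0) (hDAbin 1 0 or1 or0))
  have hW01i : Integrable (fun ω => Y 0 0 ω + (Y 0 1 ω - Y 0 0 ω) * DB 0 1 ω) μ :=
    hY00i.add (hbin_mul _ _ (hY01i.sub hY00i) (hDBm 0 1 or0 or1) (hDBbin 0 1 or0 or1))
  have hW11i : Integrable (fun ω => Y 0 0 ω + (Y 1 0 ω - Y 0 0 ω) * DA 1 1 ω +
      (Y 0 1 ω - Y 0 0 ω) * DB 1 1 ω +
      (Y 1 1 ω - Y 0 1 ω - Y 1 0 ω + Y 0 0 ω) * (DA 1 1 ω * DB 1 1 ω)) μ :=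
    ((hY00i.add (hbin_mul _ _ (hY10i.sub hY00i) (hDAm 1 1 or1 or1) (hDAbin 1 1 or1 or1))).add
      (hbin_mul _ _ (hY01i.sub hY00i) (hDBm 1 1 or1 or1) (hDBbin 1 1 or1 or1))).add
      (hbin_mul _ _ (((hY11i.sub hY01i).sub hY10i).add hY00i)
        ((hDAm 1 1 or1 or1).mul (hDBm 1 1 or1 or1)) bCC)
  have hG1i : Integrable (fun ω => (Y 1 1 ω - Y 0 1 ω - Y 1 0 ω + Y 0 0 ω) *
      (DA 1 1 ω * DB 1 1 ω)) μ :=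
    hbin_mul _ _ (((hY11i.sub hY01i).sub hY10i).add hY00i)
      ((hDAm 1 1 or1 or1).mul (hDBm 1 1 or1 or1)) bCC
  have hG2i : Integrable (fun ω => (Y 1 0 ω - Y 0 0 ω) * ((1 - DA 1 0 ω) * DA 1 1 ω)) μ :=
    hbin_mul _ _ (hY10i.sub hY00i)
      ((measurable_const.sub (hDAm 1 0 or1 or0)).mul (hDAm 1 1 or1 or1)) bJA
  have hG3i : Integrable (fun ω => (Y 1 0 ω - Y 0 0 ω) * (DA 1 0 ω * (1 - DA 1 1 ω))) μ :=
    hbin_mul _ _ (hY10i.sub hY00i)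
      ((hDAm 1 0 or1 or0).mul (measurable_const.sub (hDAm 1 1 or1 or1))) bDdA
  have hG4i : Integrable (fun ω => (Y 0 1 ω - Y 0 0 ω) * ((1 - DB 0 1 ω) * DB 1 1 ω)) μ :=
    hbin_mul _ _ (hY01i.sub hY00i)
      ((measurable_const.sub (hDBm 0 1 or0 or1)).mul (hDBm 1 1 or1 or1)) bJB
  have hG5i : Integrable (fun ω => (Y 0 1 ω - Y 0 0 ω) * (DB 0 1 ω * (1 - DB 1 1 ω))) μ :=
    hbin_mul _ _ (hY01i.sub hY00i)
      ((hDBm 0 1 or0 or1).mul (measurable_const.sub (hDBm 1 1 or1 or1))) bDdB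
  -- convert RHS set integrals
  have hCCm : MeasurableSet (CA ∩ CB) := by
    rw [hCA, hCB]
    exact ((hDAm 1 1 or1 or1) (measurableSet_singleton 1)).inter
      ((hDBm 1 1 or1 or1) (measurableSet_singleton 1))
  have hJAm : MeasurableSet JA := by
    rw [hJA]
    exact ((hDAm 1 0 or1 or0) (measurableSet_singleton 0)).inter
      ((hDAm 1 1 or1 or1) (measurableSet_singleton 1))
  have hDdAm : MeasurableSet DdA := by
    rw [hDdA]
    exact ((hDAm 1 0 or1 or0) (measurableSet_singleton 1)).inter
      ((hDAm 1 1 or1 or1) (measurableSet_singleton 0))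
  have hJBm : MeasurableSet JB := by
    rw [hJB]
    exact ((hDBm 0 1 or0 or1) (measurableSet_singleton 0)).inter
      ((hDBm 1 1 or1 or1) (measurableSet_singleton 1))
  have hDdBm : MeasurableSet DdB := by
    rw [hDdB]
    exact ((hDBm 0 1 or0 or1) (measurableSet_singleton 1)).inter
      ((hDBm 1 1 or1 or1) (measurableSet_singleton 0))
  have eCC : (∫ ω in CA ∩ CB, (Y 1 1 ω - Y 0 1 ω - Y 1 0 ω + Y 0 0 ω) ∂μ) =
      ∫ ω, (Y 1 1 ω - Y 0 1 ω - Y 1 0 ω + Y 0 0 ω) * (DA 1 1 ω * DB 1 1 ω) ∂μ := by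
    rw [← integral_indicator hCCm]
    refine integral_congr_ae (Filter.Eventually.of_forall fun ω => ?_)
    rcases hDAbin 1 1 or1 or1 ω with h1 | h1 <;> rcases hDBbin 1 1 or1 or1 ω with h2 | h2 <;>
      simp [hCA, hCB, Set.indicator_apply, h1, h2]
  have eJA : (∫ ω in JA, (Y 1 0 ω - Y 0 0 ω) ∂μ) =
      ∫ ω, (Y 1 0 ω - Y 0 0 ω) * ((1 - DA 1 0 ω) * DA 1 1 ω) ∂μ := by
    rw [← integral_indicator hJAm]
    refine integral_congr_ae (Filter.Eventually.of_forall fun ω => ?_)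
    rcases hDAbin 1 0 or1 or0 ω with h1 | h1 <;> rcases hDAbin 1 1 or1 or1 ω with h2 | h2 <;>
      simp [hJA, Set.indicator_apply, h1, h2]
  have eDdA : (∫ ω in DdA, (Y 1 0 ω - Y 0 0 ω) ∂μ) =
      ∫ ω, (Y 1 0 ω - Y 0 0 ω) * (DA 1 0 ω * (1 - DA 1 1 ω)) ∂μ := by
    rw [← integral_indicator hDdAm]
    refine integral_congr_ae (Filter.Eventually.of_forall fun ω => ?_)
    rcases hDAbin 1 0 or1 or0 ω with h1 | h1 <;> rcases hDAbin 1 1 or1 or1 ω with h2 | h2 <;>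
      simp [hDdA, Set.indicator_apply, h1, h2]
  have eJB : (∫ ω in JB, (Y 0 1 ω - Y 0 0 ω) ∂μ) =
      ∫ ω, (Y 0 1 ω - Y 0 0 ω) * ((1 - DB 0 1 ω) * DB 1 1 ω) ∂μ := by
    rw [← integral_indicator hJBm]
    refine integral_congr_ae (Filter.Eventually.of_forall fun ω => ?_)
    rcases hDBbin 0 1 or0 or1 ω with h1 | h1 <;> rcases hDBbin 1 1 or1 or1 ω with h2 | h2 <;>
      simp [hJB, Set.indicator_apply, h1, h2]
  have eDdB : (∫ ω in DdB, (Y 0 1 ω - Y 0 0 ω) ∂μ) =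
      ∫ ω, (Y 0 1 ω - Y 0 0 ω) * (DB 0 1 ω * (1 - DB 1 1 ω)) ∂μ := by
    rw [← integral_indicator hDdBm]
    refine integral_congr_ae (Filter.Eventually.of_forall fun ω => ?_)
    rcases hDBbin 0 1 or0 or1 ω with h1 | h1 <;> rcases hDBbin 1 1 or1 or1 ω with h2 | h2 <;>
      simp [hDdB, Set.indicator_apply, h1, h2]
  have lhs_eq : (∫ ω, ((Y 0 0 ω + (Y 1 0 ω - Y 0 0 ω) * DA 1 1 ω + (Y 0 1 ω - Y 0 0 ω) * DB 1 1 ω + (Y 1 1 ω - Y 0 1 ω - Y 1 0 ω + Y 0 0 ω) * (DA 1 1 ω * DB 1 1 ω)) - (Y 0 0 ω + (Y 0 1 ω - Y 0 0 ω) * DB 0 1 ω) - ((Y 0 0 ω + (Y 1 0 ω - Y 0 0 ω) * DA 1 0 ω) - (Y 0 0 ω))) ∂μ) =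
      (∫ ω, (Y 0 0 ω + (Y 1 0 ω - Y 0 0 ω) * DA 1 1 ω + (Y 0 1 ω - Y 0 0 ω) * DB 1 1 ω + (Y 1 1 ω - Y 0 1 ω - Y 1 0 ω + Y 0 0 ω) * (DA 1 1 ω * DB 1 1 ω)) ∂μ) - (∫ ω, (Y 0 0 ω + (Y 0 1 ω - Y 0 0 ω) * DB 0 1 ω) ∂μ) -
        ((∫ ω, (Y 0 0 ω + (Y 1 0 ω - Y 0 0 ω) * DA 1 0 ω) ∂μ) - (∫ ω, (Y 0 0 ω) ∂μ)) :=
    (integral_sub (hW11i.sub hW01i) (hW10i.sub hW00i)).trans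
      (congrArg₂ (fun x y => x - y) (integral_sub hW11i hW01i) (integral_sub hW10i hW00i))
  have rhs_eq : (∫ ω, (((Y 1 1 ω - Y 0 1 ω - Y 1 0 ω + Y 0 0 ω) * (DA 1 1 ω * DB 1 1 ω)) + ((Y 1 0 ω - Y 0 0 ω) * ((1 - DA 1 0 ω) * DA 1 1 ω)) - ((Y 1 0 ω - Y 0 0 ω) * (DA 1 0 ω * (1 - DA 1 1 ω))) + ((Y 0 1 ω - Y 0 0 ω) * ((1 - DB 0 1 ω) * DB 1 1 ω)) - ((Y 0 1 ω - Y 0 0 ω) * (DB 0 1 ω * (1 - DB 1 1 ω)))) ∂μ) =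
      (∫ ω, ((Y 1 1 ω - Y 0 1 ω - Y 1 0 ω + Y 0 0 ω) * (DA 1 1 ω * DB 1 1 ω)) ∂μ) + (∫ ω, ((Y 1 0 ω - Y 0 0 ω) * ((1 - DA 1 0 ω) * DA 1 1 ω)) ∂μ) - (∫ ω, ((Y 1 0 ω - Y 0 0 ω) * (DA 1 0 ω * (1 - DA 1 1 ω))) ∂μ) +
        (∫ ω, ((Y 0 1 ω - Y 0 0 ω) * ((1 - DB 0 1 ω) * DB 1 1 ω)) ∂μ) - (∫ ω, ((Y 0 1 ω - Y 0 0 ω) * (DB 0 1 ω * (1 - DB 1 1 ω))) ∂μ) :=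
    (integral_sub (((hG1i.add hG2i).sub hG3i).add hG4i) hG5i).trans
      (congrArg₂ (fun x y => x - y)
        ((integral_add ((hG1i.add hG2i).sub hG3i) hG4i).trans
          (congrArg₂ (fun x y => x + y)
            ((integral_sub (hG1i.add hG2i) hG3i).trans
              (congrArg₂ (fun x y => x - y) (integral_add hG1i hG2i) rfl))
            rfl))
        rfl)
  rw [hπ, k11, k01, k10, k00, eCC, eJA, eDdA, eJB, eDdB, ← lhs_eq, ← rhs_eq]
  exact integral_congr_ae (Filter.Eventually.of_forall fun ω => by ring)
end

section
/- (Decomposition of the second Wald estimand.) Under IV independence, one-sided noncompliance for both treatments, and P(D_A(1,1)=1)>0, the estimand δ_{A1} = (E[Y|Z_A=1,Z_B=1]−E[Y|Z_A=0,Z_B=1])/(E[D_A|Z_A=1,Z_B=1]−E[D_A|Z_A=0,Z_B=1]) satisfies δ_{A1}·P(C_A) = E[(Y(1,0)−Y(0,0))·1_{C_A}] + E[(Y(0,1)−Y(0,0))·1_{J_B}] − E[(Y(0,1)−Y(0,0))·1_{Dd_B}] + E[(Y(1,1)−Y(0,1)−Y(1,0)+Y(0,0))·1_{C_A∩C_B}],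 where C_A={D_A(1,1)=1}, C_B={D_B(1,1)=1}, J_B={D_B(0,1)=0,D_B(1,1)=1}, Dd_B={D_B(0,1)=1,D_B(1,1)=0}. -/
open MeasureTheory ProbabilityTheory

private lemma indep_setIntegral {Ω : Type*} [MeasurableSpace Ω] (μ : Measure Ω)
    [IsProbabilityMeasure μ]
    (Z : Ω → ℝ × ℝ) (W : Ω → ℝ) (hZ : Measurable Z) (hW : Integrable W μ)
    (hI : IndepFun Z W μ) (p : ℝ × ℝ) :
    ∫ ω in Z ⁻¹' {p}, W ω ∂μ = (μ (Z ⁻¹' {p})).toReal * ∫ ω, W ω ∂μ := by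
  have hE : MeasurableSet (Z ⁻¹' {p}) := hZ (measurableSet_singleton p)
  have hφ : Measurable (({p} : Set (ℝ × ℝ)).indicator (fun _ => (1:ℝ))) :=
    measurable_const.indicator (measurableSet_singleton p)
  have hI2 : IndepFun (({p} : Set (ℝ × ℝ)).indicator (fun _ => (1:ℝ)) ∘ Z) W μ :=
    hI.comp hφ measurable_id
  have hcomp : (({p} : Set (ℝ × ℝ)).indicator (fun _ => (1:ℝ)) ∘ Z)
      = (Z ⁻¹' {p}).indicator (fun _ => (1:ℝ)) := rfl
  have hind_int : Integrable ((Z ⁻¹' {p}).indicator (fun _ => (1:ℝ))) μ :=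
    (integrable_const 1).indicator hE
  have hmul := hI2.integral_mul_eq_mul_integral (by rw [hcomp]; exact hind_int.aestronglyMeasurable) hW.aestronglyMeasurable
  have h1 : (({p} : Set (ℝ × ℝ)).indicator (fun _ => (1:ℝ)) ∘ Z) * W
      = (Z ⁻¹' {p}).indicator W := by
    funext ω
    by_cases h : ω ∈ Z ⁻¹' {p}
    · simp only [Pi.mul_apply, hcomp]; rw [Set.indicator_of_mem h, Set.indicator_of_mem h, one_mul]
    · simp only [Pi.mul_apply, hcomp]; rw [Set.indicator_of_notMem h, Set.indicator_of_notMem h, zero_mul]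
  rw [h1, integral_indicator hE] at hmul
  rw [hmul, hcomp, integral_indicator hE]
  simp; left; rfl

theorem stmt_16 {Ω : Type*} [MeasurableSpace Ω] (μ : Measure Ω) [IsProbabilityMeasure μ]
    (ZA ZB : Ω → ℝ) (DA DB : ℝ → ℝ → Ω → ℝ) (Y : ℝ → ℝ → Ω → ℝ)
    (DAobs DBobs Yobs : Ω → ℝ)
    (hZAm : Measurable ZA) (hZBm : Measurable ZB)
    (hZAbin : ∀ ω, ZA ω = 0 ∨ ZA ω = 1) (hZBbin : ∀ ω, ZB ω = 0 ∨ ZB ω = 1)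
    (hDAm : ∀ z1 z2 : ℝ, (z1 = 0 ∨ z1 = 1) → (z2 = 0 ∨ z2 = 1) → Measurable (DA z1 z2))
    (hDBm : ∀ z1 z2 : ℝ, (z1 = 0 ∨ z1 = 1) → (z2 = 0 ∨ z2 = 1) → Measurable (DB z1 z2))
    (hDAbin : ∀ z1 z2 : ℝ, (z1 = 0 ∨ z1 = 1) → (z2 = 0 ∨ z2 = 1) →
      ∀ ω, DA z1 z2 ω = 0 ∨ DA z1 z2 ω = 1)
    (hDBbin : ∀ z1 z2 : ℝ, (z1 = 0 ∨ z1 = 1) → (z2 = 0 ∨ z2 = 1) →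
      ∀ ω, DB z1 z2 ω = 0 ∨ DB z1 z2 ω = 1)
    (hYm : ∀ d1 d2 : ℝ, (d1 = 0 ∨ d1 = 1) → (d2 = 0 ∨ d2 = 1) → Measurable (Y d1 d2))
    (hYint : ∀ d1 d2 : ℝ, (d1 = 0 ∨ d1 = 1) → (d2 = 0 ∨ d2 = 1) → Integrable (Y d1 d2) μ)
    (hDAobs : ∀ ω, DAobs ω = DA (ZA ω) (ZB ω) ω)
    (hDBobs : ∀ ω, DBobs ω = DB (ZA ω) (ZB ω) ω)
    (hYobs : ∀ ω, Yobs ω = Y (DAobs ω) (DBobs ω) ω)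
    (hindep : IndepFun (fun ω => (ZA ω, ZB ω))
      (fun ω => (Y 0 0 ω, Y 0 1 ω, Y 1 0 ω, Y 1 1 ω,
        DA 0 0 ω, DA 0 1 ω, DA 1 0 ω, DA 1 1 ω,
        DB 0 0 ω, DB 0 1 ω, DB 1 0 ω, DB 1 1 ω)) μ)
    (honcA : ∀ z : ℝ, (z = 0 ∨ z = 1) → ∀ ω, DA 0 z ω = 0)
    (honcB : ∀ z : ℝ, (z = 0 ∨ z = 1) → ∀ ω, DB z 0 ω = 0)
    (hz11 : 0 < μ {ω | ZA ω = 1 ∧ ZB ω = 1}) (hz01 : 0 < μ {ω | ZA ω = 0 ∧ ZB ω = 1})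
    (CA CB JB DdB : Set Ω)
    (hCA : CA = {ω | DA 1 1 ω = 1}) (hCB : CB = {ω | DB 1 1 ω = 1})
    (hJB : JB = {ω | DB 0 1 ω = 0 ∧ DB 1 1 ω = 1})
    (hDdB : DdB = {ω | DB 0 1 ω = 1 ∧ DB 1 1 ω = 0})
    (hfs : 0 < μ CA)
    (δA1 : ℝ)
    (hδ : δA1 = (cexp μ Yobs {ω | ZA ω = 1 ∧ ZB ω = 1} -
        cexp μ Yobs {ω | ZA ω = 0 ∧ ZB ω = 1}) /
      (cexp μ DAobs {ω | ZA ω = 1 ∧ ZB ω = 1} -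
        cexp μ DAobs {ω | ZA ω = 0 ∧ ZB ω = 1})) :
    δA1 * (μ CA).toReal = (∫ ω in CA, (Y 1 0 ω - Y 0 0 ω) ∂μ) +
      (∫ ω in JB, (Y 0 1 ω - Y 0 0 ω) ∂μ) - (∫ ω in DdB, (Y 0 1 ω - Y 0 0 ω) ∂μ) +
        ∫ ω in CA ∩ CB, (Y 1 1 ω - Y 0 1 ω - Y 1 0 ω + Y 0 0 ω) ∂μ := by
  have o0 : (0:ℝ) = 0 ∨ (0:ℝ) = 1 := Or.inl rfl
  have o1 : (1:ℝ) = 0 ∨ (1:ℝ) = 1 := Or.inr rfl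
  have hAbin := hDAbin 1 1 o1 o1
  have hBbin := hDBbin 1 1 o1 o1
  have hB0bin := hDBbin 0 1 o0 o1
  have hAm := hDAm 1 1 o1 o1
  have hBm := hDBm 1 1 o1 o1
  have hB0m := hDBm 0 1 o0 o1
  have hi00 := hYint 0 0 o0 o0
  have hi01 := hYint 0 1 o0 o1
  have hi10 := hYint 1 0 o1 o0
  have hi11 := hYint 1 1 o1 o1
  have hCAm : MeasurableSet CA := by rw [hCA]; exact hAm (measurableSet_singleton 1)
  have hCBm : MeasurableSet CB := by rw [hCB]; exact hBm (measurableSet_singleton 1)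
  have hJBm : MeasurableSet JB := by
    rw [hJB]
    exact (hB0m (measurableSet_singleton 0)).inter (hBm (measurableSet_singleton 1))
  have hDdBm : MeasurableSet DdB := by
    rw [hDdB]
    exact (hB0m (measurableSet_singleton 1)).inter (hBm (measurableSet_singleton 0))
  have hB01m : MeasurableSet {ω | DB 0 1 ω = 1} := hB0m (measurableSet_singleton 1)
  have hCACBm : MeasurableSet (CA ∩ CB) := hCAm.inter hCBm
  set W1 : Ω → ℝ := fun ω => Y 0 0 ω + (Y 1 0 ω - Y 0 0 ω) * DA 1 1 ω
      + (Y 0 1 ω - Y 0 0 ω) * DB 1 1 ω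
      + (Y 1 1 ω - Y 0 1 ω - Y 1 0 ω + Y 0 0 ω) * (DA 1 1 ω * DB 1 1 ω) with hW1
  set W0 : Ω → ℝ := fun ω => Y 0 0 ω + (Y 0 1 ω - Y 0 0 ω) * DB 0 1 ω with hW0
  have hg1 : Integrable (fun ω => Y 1 0 ω - Y 0 0 ω) μ := hi10.sub hi00
  have hg2 : Integrable (fun ω => Y 0 1 ω - Y 0 0 ω) μ := hi01.sub hi00
  have hg3 : Integrable (fun ω => Y 1 1 ω - Y 0 1 ω - Y 1 0 ω + Y 0 0 ω) μ :=
    ((hi11.sub hi01).sub hi10).add hi00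
  have hW1eq : W1 = fun ω => Y 0 0 ω + CA.indicator (fun ω => Y 1 0 ω - Y 0 0 ω) ω
      + CB.indicator (fun ω => Y 0 1 ω - Y 0 0 ω) ω
      + (CA ∩ CB).indicator (fun ω => Y 1 1 ω - Y 0 1 ω - Y 1 0 ω + Y 0 0 ω) ω := by
    funext ω
    rcases hAbin ω with ha | ha <;> rcases hBbin ω with hb | hb <;>
      simp only [hW1, Set.indicator_apply, Set.mem_inter_iff, hCA, hCB,
        Set.mem_setOf_eq, ha, hb] <;> norm_num
  have hW0eq : W0 = fun ω => Y 0 0 ω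
      + ({ω | DB 0 1 ω = 1} : Set Ω).indicator (fun ω => Y 0 1 ω - Y 0 0 ω) ω := by
    funext ω
    rcases hB0bin ω with hb | hb <;>
      simp only [hW0, Set.indicator_apply, Set.mem_setOf_eq, hb] <;> norm_num
  have hW1int : Integrable W1 μ := by
    rw [hW1eq]
    exact ((hi00.add (hg1.indicator hCAm)).add (hg2.indicator hCBm)).add
      (hg3.indicator hCACBm)
  have hW0int : Integrable W0 μ := by
    rw [hW0eq]; exact hi00.add (hg2.indicator hB01m)
  have hW1val : ∫ ω, W1 ω ∂μ = (∫ ω, Y 0 0 ω ∂μ) + (∫ ω in CA, (Y 1 0 ω - Y 0 0 ω) ∂μ)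
      + (∫ ω in CB, (Y 0 1 ω - Y 0 0 ω) ∂μ)
      + ∫ ω in CA ∩ CB, (Y 1 1 ω - Y 0 1 ω - Y 1 0 ω + Y 0 0 ω) ∂μ := by
    have h2 : Integrable (fun ω => Y 0 0 ω
        + CA.indicator (fun ω => Y 1 0 ω - Y 0 0 ω) ω) μ :=
      hi00.add (hg1.indicator hCAm)
    have h3 : Integrable (fun ω => Y 0 0 ω
        + CA.indicator (fun ω => Y 1 0 ω - Y 0 0 ω) ω
        + CB.indicator (fun ω => Y 0 1 ω - Y 0 0 ω) ω) μ :=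
      h2.add (hg2.indicator hCBm)
    rw [hW1eq, integral_add h3 (hg3.indicator hCACBm), integral_add h2 (hg2.indicator hCBm),
      integral_add hi00 (hg1.indicator hCAm), integral_indicator hCAm, integral_indicator hCBm,
      integral_indicator hCACBm]
  have hW0val : ∫ ω, W0 ω ∂μ = (∫ ω, Y 0 0 ω ∂μ)
      + ∫ ω in {ω | DB 0 1 ω = 1}, (Y 0 1 ω - Y 0 0 ω) ∂μ := by
    rw [hW0eq, integral_add hi00 (hg2.indicator hB01m), integral_indicator hB01m]
  have hZm : Measurable (fun ω => (ZA ω, ZB ω)) := hZAm.prodMk hZBm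
  have hIW1 : IndepFun (fun ω => (ZA ω, ZB ω)) W1 μ := by
    rw [hW1]
    have hφ : Measurable (fun p : ℝ × ℝ × ℝ × ℝ × ℝ × ℝ × ℝ × ℝ × ℝ × ℝ × ℝ × ℝ =>
        p.1 + (p.2.2.1 - p.1) * p.2.2.2.2.2.2.2.1
        + (p.2.1 - p.1) * p.2.2.2.2.2.2.2.2.2.2.2
        + (p.2.2.2.1 - p.2.1 - p.2.2.1 + p.1)
          * (p.2.2.2.2.2.2.2.1 * p.2.2.2.2.2.2.2.2.2.2.2)) := by fun_prop
    exact hindep.comp measurable_id hφ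
  have hIW0 : IndepFun (fun ω => (ZA ω, ZB ω)) W0 μ := by
    rw [hW0]
    have hφ : Measurable (fun p : ℝ × ℝ × ℝ × ℝ × ℝ × ℝ × ℝ × ℝ × ℝ × ℝ × ℝ × ℝ =>
        p.1 + (p.2.1 - p.1) * p.2.2.2.2.2.2.2.2.2.1) := by fun_prop
    exact hindep.comp measurable_id hφ
  have hIA : IndepFun (fun ω => (ZA ω, ZB ω)) (DA 1 1) μ := by
    have hφ : Measurable (fun p : ℝ × ℝ × ℝ × ℝ × ℝ × ℝ × ℝ × ℝ × ℝ × ℝ × ℝ × ℝ =>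
        p.2.2.2.2.2.2.2.1) := by fun_prop
    exact hindep.comp measurable_id hφ
  have hE11 : {ω | ZA ω = 1 ∧ ZB ω = 1} = (fun ω => (ZA ω, ZB ω)) ⁻¹' {((1:ℝ), (1:ℝ))} := by
    ext ω; simp [Prod.ext_iff]
  have hE01 : {ω | ZA ω = 0 ∧ ZB ω = 1} = (fun ω => (ZA ω, ZB ω)) ⁻¹' {((0:ℝ), (1:ℝ))} := by
    ext ω; simp [Prod.ext_iff]
  have hE11m : MeasurableSet {ω | ZA ω = 1 ∧ ZB ω = 1} := by
    rw [hE11]; exact hZm (measurableSet_singleton _)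
  have hE01m : MeasurableSet {ω | ZA ω = 0 ∧ ZB ω = 1} := by
    rw [hE01]; exact hZm (measurableSet_singleton _)
  have hp11 : (μ {ω | ZA ω = 1 ∧ ZB ω = 1}).toReal ≠ 0 :=
    (ENNReal.toReal_pos hz11.ne' (measure_ne_top μ _)).ne'
  have hp01 : (μ {ω | ZA ω = 0 ∧ ZB ω = 1}).toReal ≠ 0 :=
    (ENNReal.toReal_pos hz01.ne' (measure_ne_top μ _)).ne'
  have hpA : (μ CA).toReal ≠ 0 := (ENNReal.toReal_pos hfs.ne' (measure_ne_top μ _)).ne'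
  -- DA 1 1 as an indicator
  have hAind : DA 1 1 = CA.indicator (fun _ => (1:ℝ)) := by
    funext ω
    rcases hAbin ω with ha | ha <;>
      simp only [Set.indicator_apply, hCA, Set.mem_setOf_eq, ha] <;> norm_num
  have hDAint : Integrable (DA 1 1) μ := by
    rw [hAind]; exact (integrable_const 1).indicator hCAm
  have hDAval : ∫ ω, DA 1 1 ω ∂μ = (μ CA).toReal := by
    rw [hAind, integral_indicator hCAm]; simp; rfl
  -- conditional expectation computations
  have hY11 : ∫ ω in {ω | ZA ω = 1 ∧ ZB ω = 1}, Yobs ω ∂μ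
      = (μ {ω | ZA ω = 1 ∧ ZB ω = 1}).toReal * ∫ ω, W1 ω ∂μ := by
    have hcg : ∫ ω in {ω | ZA ω = 1 ∧ ZB ω = 1}, Yobs ω ∂μ
        = ∫ ω in {ω | ZA ω = 1 ∧ ZB ω = 1}, W1 ω ∂μ := by
      apply setIntegral_congr_fun hE11m
      intro ω hω
      obtain ⟨hza, hzb⟩ := hω
      have h1 : Yobs ω = Y (DA 1 1 ω) (DB 1 1 ω) ω := by
        rw [hYobs, hDAobs, hDBobs, hza, hzb]
      simp only [hW1]
      rcases hAbin ω with ha | ha <;> rcases hBbin ω with hb | hb <;>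
        rw [h1, ha, hb] <;> ring
    rw [hcg, hE11]
    exact indep_setIntegral μ _ W1 hZm hW1int hIW1 _
  have hY01 : ∫ ω in {ω | ZA ω = 0 ∧ ZB ω = 1}, Yobs ω ∂μ
      = (μ {ω | ZA ω = 0 ∧ ZB ω = 1}).toReal * ∫ ω, W0 ω ∂μ := by
    have hcg : ∫ ω in {ω | ZA ω = 0 ∧ ZB ω = 1}, Yobs ω ∂μ
        = ∫ ω in {ω | ZA ω = 0 ∧ ZB ω = 1}, W0 ω ∂μ := by
      apply setIntegral_congr_fun hE01m
      intro ω hω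
      obtain ⟨hza, hzb⟩ := hω
      have h1 : Yobs ω = Y 0 (DB 0 1 ω) ω := by
        rw [hYobs, hDAobs, hDBobs, hza, hzb, honcA 1 o1 ω]
      simp only [hW0]
      rcases hB0bin ω with hb | hb <;> rw [h1, hb] <;> ring
    rw [hcg, hE01]
    exact indep_setIntegral μ _ W0 hZm hW0int hIW0 _
  have hD11 : ∫ ω in {ω | ZA ω = 1 ∧ ZB ω = 1}, DAobs ω ∂μ
      = (μ {ω | ZA ω = 1 ∧ ZB ω = 1}).toReal * (μ CA).toReal := by
    have hcg : ∫ ω in {ω | ZA ω = 1 ∧ ZB ω = 1}, DAobs ω ∂μ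
        = ∫ ω in {ω | ZA ω = 1 ∧ ZB ω = 1}, DA 1 1 ω ∂μ := by
      apply setIntegral_congr_fun hE11m
      intro ω hω
      obtain ⟨hza, hzb⟩ := hω
      rw [hDAobs, hza, hzb]
    rw [hcg, hE11, indep_setIntegral μ _ (DA 1 1) hZm hDAint hIA _, hDAval]
  have hD01 : ∫ ω in {ω | ZA ω = 0 ∧ ZB ω = 1}, DAobs ω ∂μ = 0 := by
    have hcg : ∫ ω in {ω | ZA ω = 0 ∧ ZB ω = 1}, DAobs ω ∂μ
        = ∫ ω in {ω | ZA ω = 0 ∧ ZB ω = 1}, (0:ℝ) ∂μ := by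
      apply setIntegral_congr_fun hE01m
      intro ω hω
      obtain ⟨hza, hzb⟩ := hω
      rw [hDAobs, hza, hzb, honcA 1 o1 ω]
    rw [hcg]; simp
  have hc1 : cexp μ Yobs {ω | ZA ω = 1 ∧ ZB ω = 1} = ∫ ω, W1 ω ∂μ := by
    rw [cexp, hY11]; exact mul_div_cancel_left₀ _ hp11
  have hc0 : cexp μ Yobs {ω | ZA ω = 0 ∧ ZB ω = 1} = ∫ ω, W0 ω ∂μ := by
    rw [cexp, hY01]; exact mul_div_cancel_left₀ _ hp01
  have hd1 : cexp μ DAobs {ω | ZA ω = 1 ∧ ZB ω = 1} = (μ CA).toReal := by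
    rw [cexp, hD11]; exact mul_div_cancel_left₀ _ hp11
  have hd0 : cexp μ DAobs {ω | ZA ω = 0 ∧ ZB ω = 1} = 0 := by
    rw [cexp, hD01, zero_div]
  have hδ' : δA1 * (μ CA).toReal = (∫ ω, W1 ω ∂μ) - ∫ ω, W0 ω ∂μ := by
    rw [hδ, hc1, hc0, hd1, hd0, sub_zero]
    exact div_mul_cancel₀ _ hpA
  have hsplit : (∫ ω in CB, (Y 0 1 ω - Y 0 0 ω) ∂μ) + (∫ ω in DdB, (Y 0 1 ω - Y 0 0 ω) ∂μ)
      = (∫ ω in {ω | DB 0 1 ω = 1}, (Y 0 1 ω - Y 0 0 ω) ∂μ)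
        + ∫ ω in JB, (Y 0 1 ω - Y 0 0 ω) ∂μ := by
    rw [← integral_indicator hCBm, ← integral_indicator hDdBm, ← integral_indicator hB01m,
      ← integral_indicator hJBm,
      ← integral_add (hg2.indicator hCBm) (hg2.indicator hDdBm),
      ← integral_add (hg2.indicator hB01m) (hg2.indicator hJBm)]
    apply integral_congr_ae
    apply Filter.Eventually.of_forall
    intro ω
    rcases hBbin ω with hb | hb <;> rcases hB0bin ω with hb0 | hb0 <;>
      simp only [Set.indicator_apply, hCB, hJB, hDdB, Set.mem_setOf_eq, hb, hb0] <;>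
      norm_num
  rw [hδ', hW1val, hW0val]
  linarith
end

section
/- (Testable implication of no cross-defiers.) Under IV independence and one-sided noncompliance, if P(D_A(1,0)=1, D_A(1,1)=0)=0 (no cross-defiers for treatment A), then E[D_A | Z_A=1, Z_B=1] ≥ E[D_A | Z_A=1, Z_B=0]. Equivalently, if E[D_A|Z_A=1,Z_B=1] < E[D_A|Z_A=1,Z_B=0], then cross-defiers exist with positive probability. -/
open MeasureTheory ProbabilityTheory

lemma aux_int {Ω : Type*} [MeasurableSpace Ω] (μ : Measure Ω) (E : Set Ω)
    (f : Ω → ℝ) (hf : Measurable f) (hbin : ∀ ω, f ω = 0 ∨ f ω = 1) :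
    ∫ ω in E, f ω ∂μ = (μ ({ω | f ω = 1} ∩ E)).toReal := by
  have hfe : f = Set.indicator {ω | f ω = 1} (fun _ => (1 : ℝ)) := by
    funext ω
    by_cases h : f ω = 1
    · simp [Set.indicator_of_mem, h]
    · rcases hbin ω with h0 | h1
      · simp [Set.indicator_of_notMem, h, h0]
      · exact absurd h1 h
  have hS : MeasurableSet {ω | f ω = 1} := hf (measurableSet_singleton 1)
  rw [hfe, setIntegral_indicator hS]
  simp [setIntegral_const, Set.inter_comm, Measure.real]

theorem stmt_18 {Ω : Type*} [MeasurableSpace Ω] (μ : Measure Ω) [IsProbabilityMeasure μ]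
    (ZA ZB : Ω → ℝ) (DA : ℝ → ℝ → Ω → ℝ) (DAobs : Ω → ℝ)
    (hZAm : Measurable ZA) (hZBm : Measurable ZB)
    (hZAbin : ∀ ω, ZA ω = 0 ∨ ZA ω = 1) (hZBbin : ∀ ω, ZB ω = 0 ∨ ZB ω = 1)
    (hDAm : ∀ z1 z2 : ℝ, (z1 = 0 ∨ z1 = 1) → (z2 = 0 ∨ z2 = 1) → Measurable (DA z1 z2))
    (hDAbin : ∀ z1 z2 : ℝ, (z1 = 0 ∨ z1 = 1) → (z2 = 0 ∨ z2 = 1) →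
      ∀ ω, DA z1 z2 ω = 0 ∨ DA z1 z2 ω = 1)
    (hDAobs : ∀ ω, DAobs ω = DA (ZA ω) (ZB ω) ω)
    (honcA : ∀ z : ℝ, (z = 0 ∨ z = 1) → ∀ ω, DA 0 z ω = 0)
    (hindep : IndepFun (fun ω => (ZA ω, ZB ω))
      (fun ω => (DA 0 0 ω, DA 0 1 ω, DA 1 0 ω, DA 1 1 ω)) μ)
    (hz11 : 0 < μ {ω | ZA ω = 1 ∧ ZB ω = 1})
    (hz10 : 0 < μ {ω | ZA ω = 1 ∧ ZB ω = 0})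
    (hnocd : μ {ω | DA 1 0 ω = 1 ∧ DA 1 1 ω = 0} = 0) :
    cexp μ DAobs {ω | ZA ω = 1 ∧ ZB ω = 0} ≤ cexp μ DAobs {ω | ZA ω = 1 ∧ ZB ω = 1} := by
  classical
  -- key computation: cexp on the event {ZA = 1, ZB = b} equals μ {DA 1 b = 1}
  have main : ∀ (b : ℝ) (hb : b = 0 ∨ b = 1)
      (π : ℝ × ℝ × ℝ × ℝ → ℝ) (hπ : Measurable π)
      (hπ' : ∀ ω, π (DA 0 0 ω, DA 0 1 ω, DA 1 0 ω, DA 1 1 ω) = DA 1 b ω)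
      (hpos : 0 < μ {ω | ZA ω = 1 ∧ ZB ω = b}),
      cexp μ DAobs {ω | ZA ω = 1 ∧ ZB ω = b} = (μ {ω | DA 1 b ω = 1}).toReal := by
    intro b hb π hπ hπ' hpos
    set E : Set Ω := {ω | ZA ω = 1 ∧ ZB ω = b} with hEdef
    have hEeq : E = (fun ω => (ZA ω, ZB ω)) ⁻¹' ({1} ×ˢ {b}) := by
      ext ω; simp [hEdef, Set.mem_prod, and_comm]
    have hSeq : {ω | DA 1 b ω = 1} = (fun ω => (DA 0 0 ω, DA 0 1 ω, DA 1 0 ω, DA 1 1 ω)) ⁻¹' (π ⁻¹' {1}) := by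
      ext ω; simp [hπ' ω]
    have hE : MeasurableSet E :=
      (hZAm (measurableSet_singleton 1)).inter (hZBm (measurableSet_singleton b))
    have h1 : ∫ ω in E, DAobs ω ∂μ = ∫ ω in E, DA 1 b ω ∂μ := by
      apply setIntegral_congr_fun hE
      intro ω hω
      rw [hDAobs ω, hω.1, hω.2]
    have h2 : ∫ ω in E, DA 1 b ω ∂μ = (μ ({ω | DA 1 b ω = 1} ∩ E)).toReal :=
      aux_int μ E (DA 1 b) (hDAm 1 b (Or.inr rfl) hb) (hDAbin 1 b (Or.inr rfl) hb)
    have h3 : μ ({ω | DA 1 b ω = 1} ∩ E) = μ E * μ {ω | DA 1 b ω = 1} := by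
      rw [Set.inter_comm, hEeq, hSeq]
      exact hindep.measure_inter_preimage_eq_mul _ _
        ((measurableSet_singleton 1).prod (measurableSet_singleton b))
        (hπ (measurableSet_singleton 1))
    have hEne : (μ E).toReal ≠ 0 := by
      have : μ E ≠ 0 := ne_of_gt hpos
      simp [ENNReal.toReal_eq_zero_iff, this, measure_ne_top]
    rw [cexp, h1, h2, h3, ENNReal.toReal_mul, mul_div_assoc]
    field_simp
  -- projections
  have m3 : Measurable (fun p : ℝ × ℝ × ℝ × ℝ => p.2.2.1) :=
    measurable_snd.snd.fst
  have m4 : Measurable (fun p : ℝ × ℝ × ℝ × ℝ => p.2.2.2) :=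
    measurable_snd.snd.snd
  have e0 := main 0 (Or.inl rfl) (fun p => p.2.2.1) m3 (fun ω => rfl) hz10
  have e1 := main 1 (Or.inr rfl) (fun p => p.2.2.2) m4 (fun ω => rfl) hz11
  rw [e0, e1]
  have hmono : μ {ω | DA 1 0 ω = 1} ≤ μ {ω | DA 1 1 ω = 1} := by
    have hsub : {ω | DA 1 0 ω = 1} ⊆
        {ω | DA 1 1 ω = 1} ∪ {ω | DA 1 0 ω = 1 ∧ DA 1 1 ω = 0} := by
      intro ω hω
      rcases hDAbin 1 1 (Or.inr rfl) (Or.inr rfl) ω with h0 | h1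
      · exact Or.inr ⟨hω, h0⟩
      · exact Or.inl h1
    calc μ {ω | DA 1 0 ω = 1} ≤ μ ({ω | DA 1 1 ω = 1} ∪ {ω | DA 1 0 ω = 1 ∧ DA 1 1 ω = 0}) :=
          measure_mono hsub
      _ ≤ μ {ω | DA 1 1 ω = 1} + μ {ω | DA 1 0 ω = 1 ∧ DA 1 1 ω = 0} := measure_union_le _ _
      _ = μ {ω | DA 1 1 ω = 1} := by rw [hnocd, add_zero]
  exact ENNReal.toReal_mono (measure_ne_top μ _) hmono
end

section
/- (Bound on E[Y(1,0)|(c,c)] without cross-defiers for A.) Suppose additionally P(D_A(1,0)=1, D_A(1,1)=0)=0 (no A cross-defiers) and 0 ≤ Y(1,0) ≤ K a.s. Then E[Y(1,0)|C_A∩C_B] ≥ (E[Y(1,0)·1_{S_A}] − E[Y(1,0)·1_{C_A∩C_B^c}])/P(C_A∩C_B) and E[Y(1,0)|C_A∩C_B] ≤ (E[Y(1,0)·1_{S_A}] − E[Y(1,0)·1_{C_A∩C_B^c}] + K·P(J_A))/P(C_A∩C_B), where S_A={D_A(1,0)=1}, J_A={D_A(1,0)=0, D_A(1,1)=1}, C_A={D_A(1,1)=1},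 C_B={D_B(1,1)=1}. -/
open MeasureTheory ProbabilityTheory

theorem stmt_19 {Ω : Type*} [MeasurableSpace Ω] (μ : Measure Ω) [IsProbabilityMeasure μ]
    (DA DB : ℝ → ℝ → Ω → ℝ) (Y10 : Ω → ℝ) (K : ℝ) (hK : 0 < K)
    (hDAm : ∀ z1 z2 : ℝ, (z1 = 0 ∨ z1 = 1) → (z2 = 0 ∨ z2 = 1) → Measurable (DA z1 z2))
    (hDBm : ∀ z1 z2 : ℝ, (z1 = 0 ∨ z1 = 1) → (z2 = 0 ∨ z2 = 1) → Measurable (DB z1 z2))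
    (hDAbin : ∀ z1 z2 : ℝ, (z1 = 0 ∨ z1 = 1) → (z2 = 0 ∨ z2 = 1) →
      ∀ ω, DA z1 z2 ω = 0 ∨ DA z1 z2 ω = 1)
    (hDBbin : ∀ z1 z2 : ℝ, (z1 = 0 ∨ z1 = 1) → (z2 = 0 ∨ z2 = 1) →
      ∀ ω, DB z1 z2 ω = 0 ∨ DB z1 z2 ω = 1)
    (honcA : ∀ z : ℝ, (z = 0 ∨ z = 1) → ∀ ω, DA 0 z ω = 0)
    (honcB : ∀ z : ℝ, (z = 0 ∨ z = 1) → ∀ ω, DB z 0 ω = 0)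
    (hnocd : μ {ω | DA 1 0 ω = 1 ∧ DA 1 1 ω = 0} = 0)
    (hY10int : Integrable Y10 μ)
    (hY10bdd : ∀ᵐ ω ∂μ, 0 ≤ Y10 ω ∧ Y10 ω ≤ K)
    (SA JA CA CB : Set Ω)
    (hSA : SA = {ω | DA 1 0 ω = 1}) (hJA : JA = {ω | DA 1 0 ω = 0 ∧ DA 1 1 ω = 1})
    (hCA : CA = {ω | DA 1 1 ω = 1}) (hCB : CB = {ω | DB 1 1 ω = 1})
    (hcc : 0 < μ (CA ∩ CB)) :
    ((∫ ω in SA, Y10 ω ∂μ) - ∫ ω in CA ∩ CBᶜ, Y10 ω ∂μ) / (μ (CA ∩ CB)).toReal ≤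
        cexp μ Y10 (CA ∩ CB) ∧
      cexp μ Y10 (CA ∩ CB) ≤
        ((∫ ω in SA, Y10 ω ∂μ) - (∫ ω in CA ∩ CBᶜ, Y10 ω ∂μ) + K * (μ JA).toReal) /
          (μ (CA ∩ CB)).toReal := by
  have mDA10 := hDAm 1 0 (Or.inr rfl) (Or.inl rfl)
  have mDA11 := hDAm 1 1 (Or.inr rfl) (Or.inr rfl)
  have mDB11 := hDBm 1 1 (Or.inr rfl) (Or.inr rfl)
  have mSA : MeasurableSet SA := hSA ▸ (mDA10 (measurableSet_singleton 1))
  have mJA : MeasurableSet JA := by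
    rw [hJA]
    exact (mDA10 (measurableSet_singleton 0)).inter (mDA11 (measurableSet_singleton 1))
  have mCA : MeasurableSet CA := hCA ▸ (mDA11 (measurableSet_singleton 1))
  have mCB : MeasurableSet CB := hCB ▸ (mDB11 (measurableSet_singleton 1))
  set p : ℝ := (μ (CA ∩ CB)).toReal with hp
  have hpfin : μ (CA ∩ CB) ≠ ⊤ := measure_ne_top μ _
  have hppos : 0 < p := ENNReal.toReal_pos hcc.ne' hpfin
  -- SA =ᵐ SA ∩ CA
  have hSAae : SA =ᵐ[μ] (SA ∩ CA : Set Ω) := by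
    rw [MeasureTheory.ae_eq_set]
    constructor
    · refine measure_mono_null ?_ hnocd
      intro ω hω
      have h1 : DA 1 0 ω = 1 := by rw [hSA] at hω; exact hω.1
      refine ⟨h1, ?_⟩
      rcases hDAbin 1 1 (Or.inr rfl) (Or.inr rfl) ω with h | h
      · exact h
      · exact absurd ⟨(hSA ▸ hω.1 : ω ∈ SA), hCA ▸ h⟩ hω.2
    · have he : (SA ∩ CA) \ SA = ∅ := by
        rw [Set.diff_eq_empty]; exact Set.inter_subset_left
      simp [he]
  have hIS : ∫ ω in SA, Y10 ω ∂μ = ∫ ω in SA ∩ CA, Y10 ω ∂μ :=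
    setIntegral_congr_set hSAae
  -- CA = (SA ∩ CA) ∪ JA, disjoint
  have hCAsplit : CA = (SA ∩ CA) ∪ JA := by
    ext ω
    simp only [hSA, hCA, hJA, Set.mem_setOf_eq, Set.mem_union, Set.mem_inter_iff]
    constructor
    · intro h
      rcases hDAbin 1 0 (Or.inr rfl) (Or.inl rfl) ω with h0 | h0
      · exact Or.inr ⟨h0, h⟩
      · exact Or.inl ⟨h0, h⟩
    · rintro (⟨_, h⟩ | ⟨_, h⟩) <;> exact h
  have hdisj : Disjoint (SA ∩ CA) JA := by
    rw [Set.disjoint_left]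
    rintro ω ⟨h1, _⟩ h2
    rw [hSA] at h1; rw [hJA] at h2
    simp only [Set.mem_setOf_eq] at h1 h2
    rw [h2.1] at h1; norm_num at h1
  have hICA : ∫ ω in CA, Y10 ω ∂μ = (∫ ω in SA ∩ CA, Y10 ω ∂μ) + ∫ ω in JA, Y10 ω ∂μ := by
    conv_lhs => rw [hCAsplit]
    exact setIntegral_union hdisj mJA hY10int.integrableOn hY10int.integrableOn
  -- CA = (CA ∩ CB) ∪ (CA ∩ CBᶜ), disjoint
  have hCAsplit2 : CA = (CA ∩ CB) ∪ (CA ∩ CBᶜ) := by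
    rw [← Set.inter_union_distrib_left, Set.union_compl_self, Set.inter_univ]
  have hdisj2 : Disjoint (CA ∩ CB) (CA ∩ CBᶜ) :=
    disjoint_compl_right.mono Set.inter_subset_right Set.inter_subset_right
  have hICA2 : ∫ ω in CA, Y10 ω ∂μ =
      (∫ ω in CA ∩ CB, Y10 ω ∂μ) + ∫ ω in CA ∩ CBᶜ, Y10 ω ∂μ := by
    conv_lhs => rw [hCAsplit2]
    exact setIntegral_union hdisj2 (mCA.inter mCB.compl) hY10int.integrableOn
      hY10int.integrableOn
  have key : ∫ ω in CA ∩ CB, Y10 ω ∂μ =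
      (∫ ω in SA, Y10 ω ∂μ) - (∫ ω in CA ∩ CBᶜ, Y10 ω ∂μ) + ∫ ω in JA, Y10 ω ∂μ := by
    rw [hIS]; linarith [hICA, hICA2]
  have hJnn : 0 ≤ ∫ ω in JA, Y10 ω ∂μ := by
    refine setIntegral_nonneg_ae mJA ?_
    filter_upwards [hY10bdd] with ω h _
    exact h.1
  have hJub : ∫ ω in JA, Y10 ω ∂μ ≤ K * (μ JA).toReal := by
    have h1 : ∫ ω in JA, Y10 ω ∂μ ≤ ∫ _ in JA, K ∂μ := by
      refine integral_mono_ae hY10int.integrableOn (integrable_const _) ?_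
      exact ae_restrict_of_ae (hY10bdd.mono fun ω h => h.2)
    have h2 : ∫ _ in JA, K ∂μ = (μ JA).toReal * K := by
      rw [setIntegral_const, smul_eq_mul, measureReal_def]
    linarith [h1, h2 ▸ h1]
  have hden : ∀ a b : ℝ, a ≤ b → a / p ≤ b / p := fun a b h =>
    div_le_div_of_nonneg_right h hppos.le
  constructor
  · unfold cexp
    exact hden _ _ (by rw [key]; linarith)
  · unfold cexp
    exact hden _ _ (by rw [key]; linarith)
end
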